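/- arXiv:2104.02009 — 6 statements merged into one kernel-verified Lean document; each statement's English description precedes it below -/
import Mathlib

section
/- Suppose (u, r, v, Λ) and (ũ, r̃, ṽ, Λ̃) are two separable matching models (as in the context) that induce the SAME conditional match probability functions σ_c on ℝ^{d_z}×ℝ^C×ℝ^C for every c ∈ {1,…,C}. Assume: (i) scale normalization: there exists ȳ ∈ ℝ^C with (r^c)'(ȳ_c) = (r̃^c)'(ȳ_c) = 1 for every c; (ii) (r^c)'(t) ≠ 0 and (r̃^c)'(t) ≠ 0 for every t ∈ ℝ and every c; (iii) for every c there exist z ∈ ℝ^{d_z} and k ∈ {1,…,d_z} with ∂u^c/∂z_k(z) ≠ 0; (iv) rank condition: for every (z,y) ∈ ℝ^{d_z}×ℝ^C there exist w^1, w^2 ∈ ℝ^C such that the 2C×2C matrix Π(z,y,w^1,w^2) is invertible. Then for every c ∈ {1,…,C}, every k ∈ {1,…,d_z}, every z ∈ ℝ^{d_z} and every t ∈ ℝ: ∂u^c/∂z_k(z) = ∂ũ^c/∂z_k(z), ∂v^c/∂z_k(z) = ∂ṽ^c/∂z_k(z), and (r^c)'(t) = (r̃^c)'(t). -/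
/-- The conditional match probability of college `c` induced by a separable
matching model `(u, r, v, Λ)`:
`σ_c(z,y,w) = Λ_c(u^1(z)+r^1(y_1),…,u^C(z)+r^C(y_C), v^1(z)+w_1,…,v^C(z)+w_C)`. -/
noncomputable def sigmaSep (C dz : ℕ)
    (u v : Fin C → (Fin dz → ℝ) → ℝ) (r : Fin C → ℝ → ℝ)
    (Λ : Fin C → ((Fin C → ℝ) × (Fin C → ℝ)) → ℝ)
    (c : Fin C) (z : Fin dz → ℝ) (y w : Fin C → ℝ) : ℝ :=
  Λ c (fun d => u d z + r d (y d), fun d => v d z + w d)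

/-- The `2C × 2C` matrix `Π(z,y,w¹,w²)` whose `c`-th row (`Sum.inl c`) is the
gradient of `σ_c` with respect to `(y_1,…,y_C,w_1,…,w_C)` evaluated at
`(z,y,w¹)`, and whose `(C+c)`-th row (`Sum.inr c`) is the same gradient
evaluated at `(z,y,w²)`. -/
noncomputable def PiMat (C dz : ℕ)
    (σ : Fin C → (Fin dz → ℝ) → (Fin C → ℝ) → (Fin C → ℝ) → ℝ)
    (z : Fin dz → ℝ) (y w1 w2 : Fin C → ℝ) :
    Matrix (Fin C ⊕ Fin C) (Fin C ⊕ Fin C) ℝ :=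
  Matrix.of fun i j =>
    match i, j with
    | Sum.inl c, Sum.inl d => deriv (fun t => σ c z (Function.update y d t) w1) (y d)
    | Sum.inl c, Sum.inr d => deriv (fun t => σ c z y (Function.update w1 d t)) (w1 d)
    | Sum.inr c, Sum.inl d => deriv (fun t => σ c z (Function.update y d t) w2) (y d)
    | Sum.inr c, Sum.inr d => deriv (fun t => σ c z y (Function.update w2 d t)) (w2 d)

section helpers

variable {C dz : ℕ}
  (u v : Fin C → (Fin dz → ℝ) → ℝ) (r : Fin C → ℝ → ℝ)
  (Λ : Fin C → ((Fin C → ℝ) × (Fin C → ℝ)) → ℝ)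
  (c d : Fin C) (z : Fin dz → ℝ) (y w : Fin C → ℝ)

/-- The point at which Λ is evaluated. -/
noncomputable def sigPt : (Fin C → ℝ) × (Fin C → ℝ) :=
  (fun e => u e z + r e (y e), fun e => v e z + w e)

-- affine update curve
lemma hasDerivAt_updLine (A : Fin C → ℝ) (d : Fin C) (s0 : ℝ) :
    HasDerivAt (fun s => Function.update A d s) ((Pi.single d 1 : Fin C → ℝ)) s0 := by
  have h : (fun s => Function.update A d s)
      = fun s => A + (s - A d) • (Pi.single d 1 : Fin C → ℝ) := by
    funext s
    funext e
    by_cases he : e = d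
    · subst he; simp
    · simp [Function.update_of_ne he, Pi.single_apply, he]
  rw [h]
  have := (((hasDerivAt_id s0).sub_const (A d)).smul_const
    ((Pi.single d 1 : Fin C → ℝ))).const_add A
  simpa using this

lemma hasDerivAt_sigma_y (hΛ : Differentiable ℝ (Λ c))
    (hrd : DifferentiableAt ℝ (r d) (y d)) :
    HasDerivAt (fun t => sigmaSep C dz u v r Λ c z (Function.update y d t) w)
      ((fderiv ℝ (Λ c) (sigPt u v r z y w)) ((Pi.single d 1 : Fin C → ℝ), 0)
        * deriv (r d) (y d)) (y d) := by
  classical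
  set A : Fin C → ℝ := fun e => u e z + r e (y e) with hA
  set B : Fin C → ℝ := fun e => v e z + w e with hB
  have key : ∀ t, (fun e => u e z + r e (Function.update y d t e))
      = Function.update A d (u d z + r d t) := by
    intro t; funext e
    by_cases he : e = d
    · subst he; simp
    · simp [Function.update_of_ne he, hA]
  -- inner affine map in the first coordinate, as function of s := u d z + r d t
  have hg : HasDerivAt (fun s => ((Function.update A d s : Fin C → ℝ), B))
      (((Pi.single d 1 : Fin C → ℝ), (0 : Fin C → ℝ))) (u d z + r d (y d)) :=
    HasDerivAt.prodMk (hasDerivAt_updLine A d _) (hasDerivAt_const _ B)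
  have hAd : Function.update A d (u d z + r d (y d)) = A := by
    funext e; by_cases he : e = d
    · subst he; simp [hA]
    · simp [Function.update_of_ne he]
  have hΛd : HasFDerivAt (Λ c) (fderiv ℝ (Λ c) (A, B)) ((Function.update A d (u d z + r d (y d)) : Fin C → ℝ), B) := by
    rw [hAd]; exact (hΛ (A, B)).hasFDerivAt
  have houter : HasDerivAt (fun s => Λ c ((Function.update A d s : Fin C → ℝ), B))
      ((fderiv ℝ (Λ c) (A, B)) ((Pi.single d 1 : Fin C → ℝ), 0)) (u d z + r d (y d)) :=
    hΛd.comp_hasDerivAt _ hg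
  have hinner : HasDerivAt (fun t => u d z + r d t) (deriv (r d) (y d)) (y d) :=
    (hrd.hasDerivAt).const_add (u d z)
  have hcomp := houter.comp (y d) hinner
  have heq : (fun t => sigmaSep C dz u v r Λ c z (Function.update y d t) w)
        = (fun s => Λ c ((Function.update A d s : Fin C → ℝ), B)) ∘ (fun t => u d z + r d t) := by
      funext t; simp only [Function.comp_apply, sigmaSep, key t]; rfl
  simp only [sigPt, ← hA, ← hB]
  rw [heq]
  exact hcomp

lemma hasDerivAt_sigma_w (hΛ : Differentiable ℝ (Λ c)) :
    HasDerivAt (fun t => sigmaSep C dz u v r Λ c z y (Function.update w d t))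
      ((fderiv ℝ (Λ c) (sigPt u v r z y w)) (0, (Pi.single d 1 : Fin C → ℝ)))
      (w d) := by
  classical
  set A : Fin C → ℝ := fun e => u e z + r e (y e) with hA
  set B : Fin C → ℝ := fun e => v e z + w e with hB
  have key : ∀ t, (fun e => v e z + Function.update w d t e)
      = Function.update B d (v d z + t) := by
    intro t; funext e
    by_cases he : e = d
    · subst he; simp
    · simp [Function.update_of_ne he, hB]
  have hg : HasDerivAt (fun s => ((A : Fin C → ℝ), (Function.update B d s : Fin C → ℝ)))
      (((0 : Fin C → ℝ), (Pi.single d 1 : Fin C → ℝ))) (v d z + w d) :=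
    HasDerivAt.prodMk (hasDerivAt_const _ A) (hasDerivAt_updLine B d _)
  have hBd : Function.update B d (v d z + w d) = B := by
    funext e; by_cases he : e = d
    · subst he; simp [hB]
    · simp [Function.update_of_ne he]
  have hΛd : HasFDerivAt (Λ c) (fderiv ℝ (Λ c) (A, B))
      ((A : Fin C → ℝ), (Function.update B d (v d z + w d) : Fin C → ℝ)) := by
    rw [hBd]; exact (hΛ (A, B)).hasFDerivAt
  have houter : HasDerivAt (fun s => Λ c ((A : Fin C → ℝ), (Function.update B d s : Fin C → ℝ)))
      ((fderiv ℝ (Λ c) (A, B)) (0, (Pi.single d 1 : Fin C → ℝ))) (v d z + w d) :=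
    hΛd.comp_hasDerivAt _ hg
  have hinner : HasDerivAt (fun t => v d z + t) (1 : ℝ) (w d) :=
    (hasDerivAt_id (w d)).const_add (v d z)
  have hcomp := houter.comp (w d) hinner
  have heq : (fun t => sigmaSep C dz u v r Λ c z y (Function.update w d t))
      = (fun s => Λ c ((A : Fin C → ℝ), (Function.update B d s : Fin C → ℝ))) ∘ (fun t => v d z + t) := by
    funext t; simp only [Function.comp_apply, sigmaSep, key t]; rfl
  simp only [sigPt, ← hA, ← hB]
  rw [heq]
  simpa using hcomp

/-- partial derivative of a function of z in direction k, as HasDerivAt -/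
lemma partialHasDerivAt (f : (Fin dz → ℝ) → ℝ) (hf : Differentiable ℝ f)
    (z : Fin dz → ℝ) (k : Fin dz) :
    HasDerivAt (fun s => f (Function.update z k s))
      ((fderiv ℝ f z) (Pi.single k 1)) (z k) := by
  have hZ : HasDerivAt (fun s => Function.update z k s)
      ((Pi.single k 1 : Fin dz → ℝ)) (z k) := hasDerivAt_updLine z k _
  have hfz : HasFDerivAt f (fderiv ℝ f z) (Function.update z k (z k)) := by
    rw [Function.update_eq_self]; exact (hf z).hasFDerivAt
  exact hfz.comp_hasDerivAt _ hZ

lemma hasDerivAt_sigma_z (hΛ : Differentiable ℝ (Λ c))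
    (hu : ∀ e, Differentiable ℝ (u e)) (hv : ∀ e, Differentiable ℝ (v e))
    (k : Fin dz) :
    HasDerivAt (fun s => sigmaSep C dz u v r Λ c (Function.update z k s) y w)
      ((fderiv ℝ (Λ c) (sigPt u v r z y w))
        ((fun e => (fderiv ℝ (u e) z) (Pi.single k 1)),
         (fun e => (fderiv ℝ (v e) z) (Pi.single k 1)))) (z k) := by
  classical
  have hZ : HasDerivAt (fun s => Function.update z k s)
      ((Pi.single k 1 : Fin dz → ℝ)) (z k) := hasDerivAt_updLine z k _
  set M1 : (Fin dz → ℝ) →L[ℝ] (Fin C → ℝ) :=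
    ContinuousLinearMap.pi (fun e => fderiv ℝ (u e) z) with hM1
  set M2 : (Fin dz → ℝ) →L[ℝ] (Fin C → ℝ) :=
    ContinuousLinearMap.pi (fun e => fderiv ℝ (v e) z) with hM2
  have hG1 : HasFDerivAt (fun ζ => (fun e => u e ζ + r e (y e) : Fin C → ℝ)) M1 z := by
    rw [hasFDerivAt_pi']
    intro e
    have : HasFDerivAt (fun ζ => u e ζ + r e (y e)) (fderiv ℝ (u e) z) z :=
      ((hu e) z).hasFDerivAt.add_const _
    rw [hM1, ContinuousLinearMap.proj_pi]
    exact this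
  have hG2 : HasFDerivAt (fun ζ => (fun e => v e ζ + w e : Fin C → ℝ)) M2 z := by
    rw [hasFDerivAt_pi']
    intro e
    have : HasFDerivAt (fun ζ => v e ζ + w e) (fderiv ℝ (v e) z) z :=
      ((hv e) z).hasFDerivAt.add_const _
    rw [hM2, ContinuousLinearMap.proj_pi]
    exact this
  have hG : HasFDerivAt (fun ζ => ((fun e => u e ζ + r e (y e) : Fin C → ℝ),
      (fun e => v e ζ + w e : Fin C → ℝ))) (M1.prod M2) z := HasFDerivAt.prodMk hG1 hG2
  have hΛd : HasFDerivAt (Λ c) (fderiv ℝ (Λ c) (sigPt u v r z y w)) (sigPt u v r z y w) :=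
    (hΛ _).hasFDerivAt
  have hGc : HasFDerivAt (fun ζ => Λ c ((fun e => u e ζ + r e (y e) : Fin C → ℝ),
      (fun e => v e ζ + w e : Fin C → ℝ)))
      ((fderiv ℝ (Λ c) (sigPt u v r z y w)).comp (M1.prod M2)) z := by
    exact hΛd.comp z hG
  have hGc' : HasFDerivAt (fun ζ => Λ c ((fun e => u e ζ + r e (y e) : Fin C → ℝ),
      (fun e => v e ζ + w e : Fin C → ℝ)))
      ((fderiv ℝ (Λ c) (sigPt u v r z y w)).comp (M1.prod M2)) (Function.update z k (z k)) := by
    rw [Function.update_eq_self]; exact hGc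
  have hfin := hGc'.comp_hasDerivAt (z k) hZ
  have heq : (fun s => sigmaSep C dz u v r Λ c (Function.update z k s) y w)
      = (fun ζ => Λ c ((fun e => u e ζ + r e (y e) : Fin C → ℝ),
        (fun e => v e ζ + w e : Fin C → ℝ))) ∘ (fun s => Function.update z k s) := by
    funext s; simp [Function.comp, sigmaSep]
  rw [heq]
  exact hfin

lemma pi_sum_single (f : Fin C → ℝ) :
    ∑ d, f d • (Pi.single d 1 : Fin C → ℝ) = f := by
  funext e
  rw [Finset.sum_apply]
  simp [Pi.single_apply]

lemma clm_expand (L : ((Fin C → ℝ) × (Fin C → ℝ)) →L[ℝ] ℝ) (du dv : Fin C → ℝ) :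
    L (du, dv) = ∑ d, du d * L ((Pi.single d 1 : Fin C → ℝ), 0)
      + ∑ d, dv d * L (0, (Pi.single d 1 : Fin C → ℝ)) := by
  have hvec : (du, dv) = (∑ d, du d • (((Pi.single d 1 : Fin C → ℝ)), (0 : Fin C → ℝ)))
      + ∑ d, dv d • ((0 : Fin C → ℝ), ((Pi.single d 1 : Fin C → ℝ))) := by
    rw [Prod.ext_iff]
    constructor
    · simp [Prod.fst_sum, pi_sum_single]
    · simp [Prod.snd_sum, pi_sum_single]
  rw [hvec, map_add, map_sum, map_sum]
  simp only [map_smul, smul_eq_mul]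

end helpers

section key
open Matrix
variable {C dz : ℕ}
  (u v : Fin C → (Fin dz → ℝ) → ℝ) (r : Fin C → ℝ → ℝ)
  (Λ : Fin C → ((Fin C → ℝ) × (Fin C → ℝ)) → ℝ)

lemma key_mulVec
    (hu : ∀ e, Differentiable ℝ (u e)) (hv : ∀ e, Differentiable ℝ (v e))
    (hr : ∀ e, Differentiable ℝ (r e)) (hΛ : ∀ c, Differentiable ℝ (Λ c))
    (hrne : ∀ (e : Fin C) (t : ℝ), deriv (r e) t ≠ 0)
    (z : Fin dz → ℝ) (y w1 w2 : Fin C → ℝ) (k : Fin dz) :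
    PiMat C dz (sigmaSep C dz u v r Λ) z y w1 w2 *ᵥ
      (Sum.elim
        (fun e => deriv (fun s => u e (Function.update z k s)) (z k) / deriv (r e) (y e))
        (fun e => deriv (fun s => v e (Function.update z k s)) (z k)))
    = Sum.elim
        (fun c => deriv (fun s => sigmaSep C dz u v r Λ c (Function.update z k s) y w1) (z k))
        (fun c => deriv (fun s => sigmaSep C dz u v r Λ c (Function.update z k s) y w2) (z k)) := by
  classical
  have hDu : ∀ e, deriv (fun s => u e (Function.update z k s)) (z k)
      = (fderiv ℝ (u e) z) (Pi.single k 1) :=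
    fun e => (partialHasDerivAt (u e) (hu e) z k).deriv
  have hDv : ∀ e, deriv (fun s => v e (Function.update z k s)) (z k)
      = (fderiv ℝ (v e) z) (Pi.single k 1) :=
    fun e => (partialHasDerivAt (v e) (hv e) z k).deriv
  have main : ∀ (c : Fin C) (w : Fin C → ℝ),
      (∑ d, deriv (fun t => sigmaSep C dz u v r Λ c z (Function.update y d t) w) (y d)
          * (deriv (fun s => u d (Function.update z k s)) (z k) / deriv (r d) (y d)))
      + ∑ d, deriv (fun t => sigmaSep C dz u v r Λ c z y (Function.update w d t)) (w d)
          * deriv (fun s => v d (Function.update z k s)) (z k)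
      = deriv (fun s => sigmaSep C dz u v r Λ c (Function.update z k s) y w) (z k) := by
    intro c w
    set L := fderiv ℝ (Λ c) (sigPt u v r z y w) with hL
    have hy : ∀ d, deriv (fun t => sigmaSep C dz u v r Λ c z (Function.update y d t) w) (y d)
        = L ((Pi.single d 1 : Fin C → ℝ), 0) * deriv (r d) (y d) :=
      fun d => (hasDerivAt_sigma_y u v r Λ c d z y w (hΛ c) ((hr d).differentiableAt)).deriv
    have hw : ∀ d, deriv (fun t => sigmaSep C dz u v r Λ c z y (Function.update w d t)) (w d)
        = L (0, (Pi.single d 1 : Fin C → ℝ)) :=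
      fun d => (hasDerivAt_sigma_w u v r Λ c d z y w (hΛ c)).deriv
    have hz : deriv (fun s => sigmaSep C dz u v r Λ c (Function.update z k s) y w) (z k)
        = L ((fun e => (fderiv ℝ (u e) z) (Pi.single k 1)),
             (fun e => (fderiv ℝ (v e) z) (Pi.single k 1))) :=
      (hasDerivAt_sigma_z u v r Λ c z y w (hΛ c) hu hv k).deriv
    rw [hz, clm_expand]
    congr 1
    · refine Finset.sum_congr rfl fun d _ => ?_
      rw [hy d, hDu d]
      have hne := hrne d (y d)
      field_simp
    · refine Finset.sum_congr rfl fun d _ => ?_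
      rw [hw d, hDv d]
      ring
  funext i
  cases i with
  | inl c =>
    simp only [Matrix.mulVec, dotProduct, PiMat, Matrix.of_apply, Fintype.sum_sum_type,
      Sum.elim_inl, Sum.elim_inr]
    exact main c w1
  | inr c =>
    simp only [Matrix.mulVec, dotProduct, PiMat, Matrix.of_apply, Fintype.sum_sum_type,
      Sum.elim_inl, Sum.elim_inr]
    exact main c w2
end key

open Matrix in
lemma mulVec_cancel {n : Type*} [Fintype n] [DecidableEq n]
    {P : Matrix n n ℝ} (hP : IsUnit P) {x x' : n → ℝ}
    (h : P *ᵥ x = P *ᵥ x') : x = x' := by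
  obtain ⟨Q, hQ1, hQ2⟩ := isUnit_iff_exists.mp hP
  calc x = (Q * P) *ᵥ x := by rw [hQ2, Matrix.one_mulVec]
    _ = Q *ᵥ (P *ᵥ x) := by rw [Matrix.mulVec_mulVec]
    _ = Q *ᵥ (P *ᵥ x') := by rw [h]
    _ = (Q * P) *ᵥ x' := by rw [Matrix.mulVec_mulVec]
    _ = x' := by rw [hQ2, Matrix.one_mulVec]

/-- Proposition 1: if two separable matching models induce the
same conditional match probabilities and satisfy the scale normalization, the
non-degeneracy conditions, and the rank condition on `Π`, then the partial
derivatives `∂u^c/∂z_k`, `∂v^c/∂z_k` and `(r^c)'` coincide across the two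
models everywhere. -/
theorem stmt_0 (C dz : ℕ) (hC : 1 ≤ C) (hdz : 1 ≤ dz)
    (u v u' v' : Fin C → (Fin dz → ℝ) → ℝ)
    (r r' : Fin C → ℝ → ℝ)
    (Λ Λ' : Fin C → ((Fin C → ℝ) × (Fin C → ℝ)) → ℝ)
    (hu : ∀ c, ContDiff ℝ 1 (u c)) (hv : ∀ c, ContDiff ℝ 1 (v c))
    (hu' : ∀ c, ContDiff ℝ 1 (u' c)) (hv' : ∀ c, ContDiff ℝ 1 (v' c))
    (hr : ∀ c, ContDiff ℝ 1 (r c)) (hr' : ∀ c, ContDiff ℝ 1 (r' c))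
    (hΛ : ∀ c, ContDiff ℝ 1 (Λ c)) (hΛ' : ∀ c, ContDiff ℝ 1 (Λ' c))
    (hσeq : ∀ (c : Fin C) (z : Fin dz → ℝ) (y w : Fin C → ℝ),
      sigmaSep C dz u v r Λ c z y w = sigmaSep C dz u' v' r' Λ' c z y w)
    -- (i) scale normalization
    (hnorm : ∃ ybar : Fin C → ℝ, ∀ c,
      deriv (r c) (ybar c) = 1 ∧ deriv (r' c) (ybar c) = 1)
    -- (ii) the derivatives of r and r' never vanish
    (hrne : ∀ (c : Fin C) (t : ℝ), deriv (r c) t ≠ 0 ∧ deriv (r' c) t ≠ 0)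
    -- (iii) for every c, some partial derivative of u^c is nonzero somewhere
    (hune : ∀ c : Fin C, ∃ (z : Fin dz → ℝ) (k : Fin dz),
      deriv (fun s => u c (Function.update z k s)) (z k) ≠ 0)
    -- (iv) rank condition on Π
    (hrank : ∀ (z : Fin dz → ℝ) (y : Fin C → ℝ), ∃ w1 w2 : Fin C → ℝ,
      IsUnit (PiMat C dz (sigmaSep C dz u v r Λ) z y w1 w2)) :
    ∀ (c : Fin C) (k : Fin dz) (z : Fin dz → ℝ) (t : ℝ),
      deriv (fun s => u c (Function.update z k s)) (z k) =
        deriv (fun s => u' c (Function.update z k s)) (z k) ∧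
      deriv (fun s => v c (Function.update z k s)) (z k) =
        deriv (fun s => v' c (Function.update z k s)) (z k) ∧
      deriv (r c) t = deriv (r' c) t := by
  classical
  obtain ⟨ybar, hybar⟩ := hnorm
  have hud : ∀ e, Differentiable ℝ (u e) := fun e => (hu e).differentiable one_ne_zero
  have hvd : ∀ e, Differentiable ℝ (v e) := fun e => (hv e).differentiable one_ne_zero
  have hud' : ∀ e, Differentiable ℝ (u' e) := fun e => (hu' e).differentiable one_ne_zero
  have hvd' : ∀ e, Differentiable ℝ (v' e) := fun e => (hv' e).differentiable one_ne_zero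
  have hrd : ∀ e, Differentiable ℝ (r e) := fun e => (hr e).differentiable one_ne_zero
  have hrd' : ∀ e, Differentiable ℝ (r' e) := fun e => (hr' e).differentiable one_ne_zero
  have hΛd : ∀ c, Differentiable ℝ (Λ c) := fun c => (hΛ c).differentiable one_ne_zero
  have hΛd' : ∀ c, Differentiable ℝ (Λ' c) := fun c => (hΛ' c).differentiable one_ne_zero
  have hσfun : sigmaSep C dz u v r Λ = sigmaSep C dz u' v' r' Λ' := by
    funext c z y w; exact hσeq c z y w
  have core : ∀ (z : Fin dz → ℝ) (y : Fin C → ℝ) (k : Fin dz),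
      (∀ d, deriv (fun s => u d (Function.update z k s)) (z k) / deriv (r d) (y d)
          = deriv (fun s => u' d (Function.update z k s)) (z k) / deriv (r' d) (y d))
      ∧ (∀ d, deriv (fun s => v d (Function.update z k s)) (z k)
          = deriv (fun s => v' d (Function.update z k s)) (z k)) := by
    intro z y k
    obtain ⟨w1, w2, hP⟩ := hrank z y
    have h1 := key_mulVec u v r Λ hud hvd hrd hΛd (fun e t => (hrne e t).1) z y w1 w2 k
    have h2 := key_mulVec u' v' r' Λ' hud' hvd' hrd' hΛd' (fun e t => (hrne e t).2)
      z y w1 w2 k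
    rw [← hσfun] at h2
    have hx := mulVec_cancel hP (h1.trans h2.symm)
    constructor
    · intro d; exact congrFun hx (Sum.inl d)
    · intro d; exact congrFun hx (Sum.inr d)
  have hU : ∀ (d : Fin C) (z : Fin dz → ℝ) (k : Fin dz),
      deriv (fun s => u d (Function.update z k s)) (z k)
        = deriv (fun s => u' d (Function.update z k s)) (z k) := by
    intro d z k
    have h := (core z ybar k).1 d
    rwa [(hybar d).1, (hybar d).2, div_one, div_one] at h
  intro c k z t
  refine ⟨hU c z k, (core z ybar k).2 c, ?_⟩
  obtain ⟨z0, k0, hz0⟩ := hune c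
  have h := (core z0 (Function.update ybar c t) k0).1 c
  rw [Function.update_self] at h
  rw [← hU c z0 k0] at h
  have hp := (hrne c t).1
  have hq := (hrne c t).2
  field_simp at h
  exact h.symm
end

section
/- Let (u, r, v, Λ) be a separable matching model (as in the context) with induced conditional match probabilities σ_c, and let y ∈ ℝ^C be such that (r^c)'(y_c) ≠ 0 for every c ∈ {1,…,C}. Then for every z ∈ ℝ^{d_z}, every pair w^1, w^2 ∈ ℝ^C, and every k ∈ {1,…,d_z}, the 2C-vector whose first C entries are ∂σ_c/∂z_k(z,y,w^1) (c = 1,…,C) and whose last C entries are ∂σ_c/∂z_k(z,y,w^2) (c = 1,…,C) equals the matrix–vector product of Π(z,y,w^1,w^2) with the 2C-vector whose first C entries are ∂u^c/∂z_k(z) / (r^c)'(y_c) and whose last C entries are ∂v^c/∂z_k(z). -/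
section Aux

variable {C dz : ℕ}
  (u v : Fin C → (Fin dz → ℝ) → ℝ) (r : Fin C → ℝ → ℝ)
  (Λ : Fin C → ((Fin C → ℝ) × (Fin C → ℝ)) → ℝ)

/-- Key row computation: the `z_k`-derivative of `σ_c` at `(z,y,w)` equals the
`c`-th row of the linear system. -/
lemma sigmaSep_key
    (hu : ∀ c, ContDiff ℝ 1 (u c)) (hv : ∀ c, ContDiff ℝ 1 (v c))
    (hr : ∀ c, ContDiff ℝ 1 (r c)) (hΛ : ∀ c, ContDiff ℝ 1 (Λ c))
    (y : Fin C → ℝ) (hy : ∀ c, deriv (r c) (y c) ≠ 0)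
    (z : Fin dz → ℝ) (w : Fin C → ℝ) (k : Fin dz) (c : Fin C) :
    deriv (fun t => sigmaSep C dz u v r Λ c (Function.update z k t) y w) (z k)
    = (∑ d, deriv (fun t => sigmaSep C dz u v r Λ c z (Function.update y d t) w) (y d)
        * (deriv (fun s => u d (Function.update z k s)) (z k) / deriv (r d) (y d)))
    + ∑ d, deriv (fun t => sigmaSep C dz u v r Λ c z y (Function.update w d t)) (w d)
        * deriv (fun s => v d (Function.update z k s)) (z k) := by
  classical
  set p : (Fin C → ℝ) × (Fin C → ℝ) :=
    (fun d => u d z + r d (y d), fun d => v d z + w d) with hp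
  set L := fderiv ℝ (Λ c) p with hLdef
  have hL : HasFDerivAt (Λ c) L p :=
    (((hΛ c).differentiable one_ne_zero) p).hasFDerivAt
  set U : Fin C → ℝ := fun d => deriv (fun s => u d (Function.update z k s)) (z k) with hU
  set V : Fin C → ℝ := fun d => deriv (fun s => v d (Function.update z k s)) (z k) with hV
  -- derivatives of coordinate maps along z_k
  have hUd : ∀ d, HasDerivAt (fun s => u d (Function.update z k s)) (U d) (z k) := by
    intro d
    have : DifferentiableAt ℝ (fun s => u d (Function.update z k s)) (z k) :=
      (((hu d).differentiable one_ne_zero) _).comp _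
        (hasDerivAt_update z k (z k)).differentiableAt
    exact this.hasDerivAt
  have hVd : ∀ d, HasDerivAt (fun s => v d (Function.update z k s)) (V d) (z k) := by
    intro d
    have : DifferentiableAt ℝ (fun s => v d (Function.update z k s)) (z k) :=
      (((hv d).differentiable one_ne_zero) _).comp _
        (hasDerivAt_update z k (z k)).differentiableAt
    exact this.hasDerivAt
  -- derivative of the z_k path
  have hzpath : HasDerivAt
      (fun t => ((fun d => u d (Function.update z k t) + r d (y d),
        fun d => v d (Function.update z k t) + w d) : (Fin C → ℝ) × (Fin C → ℝ)))
      ((U, V) : (Fin C → ℝ) × (Fin C → ℝ)) (z k) := by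
    refine HasDerivAt.prodMk ?_ ?_
    · exact hasDerivAt_pi.2 fun d => (hUd d).add_const _
    · exact hasDerivAt_pi.2 fun d => (hVd d).add_const _
  have hz0 : Function.update z k (z k) = z := Function.update_eq_self _ _
  have hLHS : HasDerivAt
      (fun t => sigmaSep C dz u v r Λ c (Function.update z k t) y w)
      (L (U, V)) (z k) := by
    have hL' : HasFDerivAt (Λ c) L
        ((fun d => u d (Function.update z k (z k)) + r d (y d),
          fun d => v d (Function.update z k (z k)) + w d)) := by
      rw [hz0]; exact hL
    exact hL'.comp_hasDerivAt _ hzpath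
  -- derivatives in the y-directions
  have hYrow : ∀ d : Fin C,
      HasDerivAt (fun t => sigmaSep C dz u v r Λ c z (Function.update y d t) w)
        (L (Pi.single d (deriv (r d) (y d)), 0)) (y d) := by
    intro d
    have hpath : HasDerivAt
        (fun t => ((fun d' => u d' z + r d' (Function.update y d t d'),
          fun d' => v d' z + w d') : (Fin C → ℝ) × (Fin C → ℝ)))
        ((Pi.single d (deriv (r d) (y d)), 0) : (Fin C → ℝ) × (Fin C → ℝ)) (y d) := by
      refine HasDerivAt.prodMk ?_ (hasDerivAt_const _ _)
      refine hasDerivAt_pi.2 fun d' => ?_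
      by_cases h : d' = d
      · subst h
        simp only [Function.update_self, Pi.single_eq_same]
        exact (((hr d').differentiable one_ne_zero (y d')).hasDerivAt).const_add _
      · simp only [Function.update_of_ne h, Pi.single_eq_of_ne h]
        exact hasDerivAt_const _ _
    have hL' : HasFDerivAt (Λ c) L
        ((fun d' => u d' z + r d' (Function.update y d (y d) d'),
          fun d' => v d' z + w d')) := by
      rw [Function.update_eq_self]; exact hL
    exact hL'.comp_hasDerivAt _ hpath
  -- derivatives in the w-directions
  have hWrow : ∀ d : Fin C,
      HasDerivAt (fun t => sigmaSep C dz u v r Λ c z y (Function.update w d t))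
        (L (0, Pi.single d 1)) (w d) := by
    intro d
    have hpath : HasDerivAt
        (fun t => ((fun d' => u d' z + r d' (y d'),
          fun d' => v d' z + Function.update w d t d') : (Fin C → ℝ) × (Fin C → ℝ)))
        ((0, Pi.single d 1) : (Fin C → ℝ) × (Fin C → ℝ)) (w d) := by
      refine HasDerivAt.prodMk (hasDerivAt_const _ _) ?_
      refine hasDerivAt_pi.2 fun d' => ?_
      by_cases h : d' = d
      · subst h
        simp only [Function.update_self, Pi.single_eq_same]
        exact (hasDerivAt_id _).const_add _
      · simp only [Function.update_of_ne h, Pi.single_eq_of_ne h]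
        exact hasDerivAt_const _ _
    have hL' : HasFDerivAt (Λ c) L
        ((fun d' => u d' z + r d' (y d'),
          fun d' => v d' z + Function.update w d (w d) d')) := by
      rw [Function.update_eq_self]; exact hL
    exact hL'.comp_hasDerivAt _ hpath
  -- now rewrite all the derivs and compute
  rw [hLHS.deriv]
  have e1 : ∀ d : Fin C,
      deriv (fun t => sigmaSep C dz u v r Λ c z (Function.update y d t) w) (y d)
        = L (Pi.single d (deriv (r d) (y d)), 0) := fun d => (hYrow d).deriv
  have e2 : ∀ d : Fin C,
      deriv (fun t => sigmaSep C dz u v r Λ c z y (Function.update w d t)) (w d)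
        = L (0, Pi.single d 1) := fun d => (hWrow d).deriv
  simp only [e1, e2]
  have t1 : ∀ d : Fin C,
      L (Pi.single d (deriv (r d) (y d)), 0) * (U d / deriv (r d) (y d))
        = L ((Pi.single d (U d), 0) : (Fin C → ℝ) × (Fin C → ℝ)) := by
    intro d
    rw [mul_comm, ← smul_eq_mul, ← map_smul]
    congr 1
    ext d'
    · by_cases h : d' = d
      · subst h
        simp [div_mul_cancel₀ _ (hy d')]
      · simp [Pi.single_eq_of_ne h]
    · simp
  have t2 : ∀ d : Fin C,
      L ((0, Pi.single d 1) : (Fin C → ℝ) × (Fin C → ℝ)) * V d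
        = L ((0, Pi.single d (V d)) : (Fin C → ℝ) × (Fin C → ℝ)) := by
    intro d
    rw [mul_comm, ← smul_eq_mul, ← map_smul]
    congr 1
    ext d'
    · simp
    · by_cases h : d' = d
      · subst h; simp
      · simp [Pi.single_eq_of_ne h]
  simp only [hU, hV] at t1 t2
  simp only [t1, t2, ← map_sum]
  rw [← map_add]
  congr 1
  ext d' <;>
    simp [Prod.fst_sum, Prod.snd_sum, Finset.sum_apply, Pi.single_apply, hU, hV]

end Aux

/-- equation (7)/(A.4): the key linear system. The stacked vector
of partial derivatives `∂σ_c/∂z_k` at `(z,y,w¹)` and `(z,y,w²)` equals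
`Π(z,y,w¹,w²)` multiplied by the vector whose first `C` entries are
`∂u^c/∂z_k(z) / (r^c)'(y_c)` and whose last `C` entries are `∂v^c/∂z_k(z)`. -/
theorem stmt_1 (C dz : ℕ) (hC : 1 ≤ C) (hdz : 1 ≤ dz)
    (u v : Fin C → (Fin dz → ℝ) → ℝ)
    (r : Fin C → ℝ → ℝ)
    (Λ : Fin C → ((Fin C → ℝ) × (Fin C → ℝ)) → ℝ)
    (hu : ∀ c, ContDiff ℝ 1 (u c)) (hv : ∀ c, ContDiff ℝ 1 (v c))
    (hr : ∀ c, ContDiff ℝ 1 (r c)) (hΛ : ∀ c, ContDiff ℝ 1 (Λ c))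
    (y : Fin C → ℝ) (hy : ∀ c, deriv (r c) (y c) ≠ 0) :
    ∀ (z : Fin dz → ℝ) (w1 w2 : Fin C → ℝ) (k : Fin dz),
      (Sum.elim
        (fun c => deriv
          (fun t => sigmaSep C dz u v r Λ c (Function.update z k t) y w1) (z k))
        (fun c => deriv
          (fun t => sigmaSep C dz u v r Λ c (Function.update z k t) y w2) (z k))) =
      (PiMat C dz (sigmaSep C dz u v r Λ) z y w1 w2).mulVec
        (Sum.elim
          (fun c => deriv (fun s => u c (Function.update z k s)) (z k) /
            deriv (r c) (y c))
          (fun c => deriv (fun s => v c (Function.update z k s)) (z k))) := by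
  intro z w1 w2 k
  funext i
  cases i with
  | inl c =>
    rw [Sum.elim_inl, Matrix.mulVec, dotProduct, Fintype.sum_sum_type]
    simp only [PiMat, Matrix.of_apply, Sum.elim_inl, Sum.elim_inr]
    exact sigmaSep_key u v r Λ hu hv hr hΛ y hy z w1 k c
  | inr c =>
    rw [Sum.elim_inr, Matrix.mulVec, dotProduct, Fintype.sum_sum_type]
    simp only [PiMat, Matrix.of_apply, Sum.elim_inl, Sum.elim_inr]
    exact sigmaSep_key u v r Λ hu hv hr hΛ y hy z w2 k c
end

section
/- Suppose (β, γ, Λ) and (β̃, γ̃, Λ̃) are two linear-index matching models (as in the context) that induce the SAME conditional match probability functions σ_c on ℝ^{d_z}×ℝ^C×ℝ^C for every c ∈ {1,…,C}, and suppose there exist z ∈ ℝ^{d_z}, y ∈ ℝ^C, and w^1, w^2 ∈ ℝ^C such that the 2C×2C matrix Π(z,y,w^1,w^2) is invertible. Then β_c = β̃_c and γ_c = γ̃_c for every c ∈ {1,…,C}. -/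
/-- The conditional match probability of college `c` induced by a linear-index
matching model `(β, γ, Λ)`:
`σ_c(z,y,w) = Λ_c(y_1+z·β_1,…,y_C+z·β_C, w_1+z·γ_1,…,w_C+z·γ_C)`. -/
noncomputable def sigmaLin (C dz : ℕ)
    (β γ : Fin C → Fin dz → ℝ)
    (Λ : Fin C → ((Fin C → ℝ) × (Fin C → ℝ)) → ℝ)
    (c : Fin C) (z : Fin dz → ℝ) (y w : Fin C → ℝ) : ℝ :=
  Λ c (fun d => y d + ∑ k, z k * β d k, fun d => w d + ∑ k, z k * γ d k)

lemma lineDeriv_eq {E : Type*} [NormedAddCommGroup E] [NormedSpace ℝ E]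
    (f : E → ℝ) (P v : E) (a : ℝ) (hf : DifferentiableAt ℝ f P) :
    deriv (fun t => f (P + (t - a) • v)) a = fderiv ℝ f P v := by
  have h1 : HasDerivAt (fun t : ℝ => P + (t - a) • v) ((1:ℝ) • v) a :=
    (((hasDerivAt_id a).sub_const a).smul_const v).const_add P
  have h2 : HasFDerivAt f (fderiv ℝ f P) (P + ((a:ℝ) - a) • v) := by
    simpa using hf.hasFDerivAt
  have h3 := h2.comp_hasDerivAt a h1
  simpa [Function.comp_def] using h3.deriv

lemma fderiv_pair_combo (C : ℕ) (L : ((Fin C → ℝ) × (Fin C → ℝ)) →L[ℝ] ℝ)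
    (a b : Fin C → ℝ) :
    (∑ d, L ((Pi.single d 1 : Fin C → ℝ), (0 : Fin C → ℝ)) * a d)
      + (∑ d, L ((0 : Fin C → ℝ), (Pi.single d 1 : Fin C → ℝ)) * b d)
    = L (a, b) := by
  have hv : ((a, b) : (Fin C → ℝ) × (Fin C → ℝ))
      = ∑ d, (a d • ((Pi.single d 1 : Fin C → ℝ), (0 : Fin C → ℝ))
          + b d • ((0 : Fin C → ℝ), (Pi.single d 1 : Fin C → ℝ))) := by
    refine Prod.ext ?_ ?_
    · simp only [Prod.fst_sum, Prod.fst_add, Prod.smul_mk, smul_zero, add_zero]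
      funext e
      simp [Finset.sum_apply, Pi.single_apply, mul_ite, Finset.sum_ite_eq]
    · simp only [Prod.snd_sum, Prod.snd_add, Prod.smul_mk, smul_zero, zero_add]
      funext e
      simp [Finset.sum_apply, Pi.single_apply, mul_ite, Finset.sum_ite_eq]
  rw [hv, map_sum]
  simp only [map_add, map_smul, smul_eq_mul]
  rw [Finset.sum_add_distrib]
  congr 1 <;> exact Finset.sum_congr rfl fun d _ => mul_comm _ _

lemma mulVec_key (C dz : ℕ) (β γ : Fin C → Fin dz → ℝ)
    (Λ : Fin C → ((Fin C → ℝ) × (Fin C → ℝ)) → ℝ)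
    (hΛ : ∀ c, Differentiable ℝ (Λ c))
    (z : Fin dz → ℝ) (y w1 w2 : Fin C → ℝ) (k : Fin dz) :
    (PiMat C dz (sigmaLin C dz β γ Λ) z y w1 w2).mulVec
      (Sum.elim (fun d => β d k) (fun d => γ d k))
    = Sum.elim
        (fun c => deriv (fun t => sigmaLin C dz β γ Λ c (Function.update z k t) y w1) (z k))
        (fun c => deriv (fun t => sigmaLin C dz β γ Λ c (Function.update z k t) y w2) (z k)) := by
  set P : (Fin C → ℝ) → (Fin C → ℝ) × (Fin C → ℝ) :=
    fun w => (fun e => y e + ∑ j, z j * β e j, fun e => w e + ∑ j, z j * γ e j) with hP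
  have hy : ∀ (w : Fin C → ℝ) (c d : Fin C),
      deriv (fun t => sigmaLin C dz β γ Λ c z (Function.update y d t) w) (y d)
        = fderiv ℝ (Λ c) (P w) ((Pi.single d 1 : Fin C → ℝ), (0 : Fin C → ℝ)) := by
    intro w c d
    have hrw : (fun t => sigmaLin C dz β γ Λ c z (Function.update y d t) w)
        = fun t => Λ c (P w + (t - y d) • ((Pi.single d 1 : Fin C → ℝ), (0 : Fin C → ℝ))) := by
      funext t
      simp only [sigmaLin, hP]
      refine congrArg (Λ c) (Prod.ext ?_ ?_)
      · funext e
        by_cases h : e = d <;>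
          simp [h, Function.update_apply, Pi.single_apply, smul_eq_mul] <;> ring
      · funext e
        simp
    rw [hrw]
    exact lineDeriv_eq _ _ _ _ ((hΛ c).differentiableAt)
  have hw : ∀ (w : Fin C → ℝ) (c d : Fin C),
      deriv (fun t => sigmaLin C dz β γ Λ c z y (Function.update w d t)) (w d)
        = fderiv ℝ (Λ c) (P w) ((0 : Fin C → ℝ), (Pi.single d 1 : Fin C → ℝ)) := by
    intro w c d
    have hrw : (fun t => sigmaLin C dz β γ Λ c z y (Function.update w d t))
        = fun t => Λ c (P w + (t - w d) • ((0 : Fin C → ℝ), (Pi.single d 1 : Fin C → ℝ))) := by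
      funext t
      simp only [sigmaLin, hP]
      refine congrArg (Λ c) (Prod.ext ?_ ?_)
      · funext e
        simp
      · funext e
        by_cases h : e = d <;>
          simp [h, Function.update_apply, Pi.single_apply, smul_eq_mul] <;> ring
    rw [hrw]
    exact lineDeriv_eq _ _ _ _ ((hΛ c).differentiableAt)
  have hsum : ∀ (v : Fin C → Fin dz → ℝ) (e : Fin C) (t : ℝ),
      ∑ j, Function.update z k t j * v e j = (∑ j, z j * v e j) + (t - z k) * v e k := by
    intro v e t
    have h1 : ∀ j ∈ Finset.univ,
        Function.update z k t j * v e j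
          = z j * v e j + (if j = k then (t - z k) * v e k else 0) := by
      intro j _
      by_cases h : j = k
      · subst h; simp [Function.update_self]; ring
      · simp [Function.update_apply, h]
    rw [Finset.sum_congr rfl h1, Finset.sum_add_distrib, Finset.sum_ite_eq' Finset.univ k]
    simp
  have hz : ∀ (w : Fin C → ℝ) (c : Fin C),
      deriv (fun t => sigmaLin C dz β γ Λ c (Function.update z k t) y w) (z k)
        = fderiv ℝ (Λ c) (P w) ((fun e => β e k), (fun e => γ e k)) := by
    intro w c
    have hrw : (fun t => sigmaLin C dz β γ Λ c (Function.update z k t) y w)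
        = fun t => Λ c (P w + (t - z k) • (((fun e => β e k) : Fin C → ℝ), ((fun e => γ e k) : Fin C → ℝ))) := by
      funext t
      simp only [sigmaLin, hP]
      refine congrArg (Λ c) (Prod.ext ?_ ?_) <;> funext e <;> simp [smul_eq_mul] <;>
        rw [hsum] <;> ring
    rw [hrw]
    exact lineDeriv_eq _ _ _ _ ((hΛ c).differentiableAt)
  have hM : ∀ i j, PiMat C dz (sigmaLin C dz β γ Λ) z y w1 w2 i j
      = Sum.elim (fun c => (fderiv ℝ (Λ c) (P w1) : ((Fin C → ℝ) × (Fin C → ℝ)) →L[ℝ] ℝ))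
          (fun c => fderiv ℝ (Λ c) (P w2)) i
        (Sum.elim (fun d => (((Pi.single d 1 : Fin C → ℝ)), (0 : Fin C → ℝ)))
          (fun d => ((0 : Fin C → ℝ), (Pi.single d 1 : Fin C → ℝ))) j) := by
    intro i j
    cases i <;> cases j <;> simp [PiMat, hy, hw]
  funext i
  simp only [Matrix.mulVec, dotProduct]
  rw [Finset.sum_congr rfl (fun j _ => by rw [hM i j])]
  cases i with
  | inl c =>
      simp only [Fintype.sum_sum_type, Sum.elim_inl, Sum.elim_inr]
      rw [fderiv_pair_combo, ← hz w1 c]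
  | inr c =>
      simp only [Fintype.sum_sum_type, Sum.elim_inl, Sum.elim_inr]
      rw [fderiv_pair_combo, ← hz w2 c]
/-- Proposition 3, continuous covariates: if two linear-index
matching models induce the same conditional match probabilities and the matrix
`Π(z,y,w¹,w²)` is invertible at some point, then the coefficient vectors
coincide: `β_c = β̃_c` and `γ_c = γ̃_c` for every `c`. -/
theorem stmt_4 (C dz : ℕ) (hC : 1 ≤ C) (hdz : 1 ≤ dz)
    (β γ β' γ' : Fin C → Fin dz → ℝ)
    (Λ Λ' : Fin C → ((Fin C → ℝ) × (Fin C → ℝ)) → ℝ)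
    (hΛ : ∀ c, ContDiff ℝ 1 (Λ c)) (hΛ' : ∀ c, ContDiff ℝ 1 (Λ' c))
    (hσeq : ∀ (c : Fin C) (z : Fin dz → ℝ) (y w : Fin C → ℝ),
      sigmaLin C dz β γ Λ c z y w = sigmaLin C dz β' γ' Λ' c z y w)
    (hrank : ∃ (z : Fin dz → ℝ) (y w1 w2 : Fin C → ℝ),
      IsUnit (PiMat C dz (sigmaLin C dz β γ Λ) z y w1 w2)) :
    ∀ c : Fin C, β c = β' c ∧ γ c = γ' c := by
  obtain ⟨z, y, w1, w2, hU⟩ := hrank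
  have hσfun : sigmaLin C dz β γ Λ = sigmaLin C dz β' γ' Λ' := by
    funext c z y w; exact hσeq c z y w
  have hd : ∀ c, Differentiable ℝ (Λ c) := fun c => (hΛ c).differentiable one_ne_zero
  have hd' : ∀ c, Differentiable ℝ (Λ' c) := fun c => (hΛ' c).differentiable one_ne_zero
  have hx : ∀ k : Fin dz,
      (Sum.elim (fun d => β d k) (fun d => γ d k) : Fin C ⊕ Fin C → ℝ)
        = Sum.elim (fun d => β' d k) (fun d => γ' d k) := by
    intro k
    have h1 := mulVec_key C dz β γ Λ hd z y w1 w2 k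
    have h2 := mulVec_key C dz β' γ' Λ' hd' z y w1 w2 k
    rw [← hσfun] at h2
    have hinj : Function.Injective
        (PiMat C dz (sigmaLin C dz β γ Λ) z y w1 w2).mulVec :=
      (Matrix.mulVec_injective_iff_isUnit).2 hU
    exact hinj (h1.trans h2.symm)
  intro c
  constructor
  · funext k
    simpa using congrFun (hx k) (Sum.inl c)
  · funext k
    simpa using congrFun (hx k) (Sum.inr c)
end

section
/- Fix integers C ≥ 1 and d_z ≥ 1. For c ∈ {1,…,C} let Ψ_c, Ψ̃_c : ℝ² → ℝ be continuously differentiable, and let β, γ, β̃, γ̃ ∈ ℝ^{d_z}. Define σ_c(z,y,w) = Ψ_c(y + z·β, w + z·γ) and σ̃_c(z,y,w) = Ψ̃_c(y + z·β̃, w + z·γ̃) for (z,y,w) ∈ ℝ^{d_z}×ℝ×ℝ. Suppose σ_c = σ̃_c as functions for every c, and suppose there exists a point (z,y,w) at which the C×2 matrix whose c-th row is (∂σ_c/∂y(z,y,w), ∂σ_c/∂w(z,y,w)) has rank 2. Then β = β̃ and γ = γ̃. -/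
lemma key_deriv (F : (ℝ × ℝ) → ℝ) (hF : ContDiff ℝ 1 F) (A B a b t0 : ℝ)
    (p : ℝ × ℝ) (hp : p = (A + t0 * a, B + t0 * b)) :
    HasDerivAt (fun t => F (A + t * a, B + t * b))
      (fderiv ℝ F p (a, b)) t0 := by
  subst hp
  have h1 : HasDerivAt (fun t : ℝ => (A + t * a, B + t * b)) (a, b) t0 := by
    exact HasDerivAt.prodMk (by simpa using ((hasDerivAt_id t0).mul_const a).const_add A)
      (by simpa using ((hasDerivAt_id t0).mul_const b).const_add B)
  exact ((hF.differentiable one_ne_zero _).hasFDerivAt).comp_hasDerivAt t0 h1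


/-- Proposition 5, fully homogeneous case: in the
homogeneous-coefficient matching model with
`σ_c(z,y,w) = Ψ_c(y + z·β, w + z·γ)`, if two such models induce the same
conditional match probabilities and at some point the `C × 2` matrix of
derivatives `(∂σ_c/∂y, ∂σ_c/∂w)` has rank `2`, then `β = β̃` and `γ = γ̃`. -/
theorem stmt_5 (C dz : ℕ) (hC : 1 ≤ C) (hdz : 1 ≤ dz)
    (Ψ Ψ' : Fin C → (ℝ × ℝ) → ℝ)
    (hΨ : ∀ c, ContDiff ℝ 1 (Ψ c)) (hΨ' : ∀ c, ContDiff ℝ 1 (Ψ' c))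
    (β γ β' γ' : Fin dz → ℝ)
    (σ σ' : Fin C → (Fin dz → ℝ) → ℝ → ℝ → ℝ)
    (hσ : ∀ (c : Fin C) (z : Fin dz → ℝ) (y w : ℝ),
      σ c z y w = Ψ c (y + ∑ k, z k * β k, w + ∑ k, z k * γ k))
    (hσ' : ∀ (c : Fin C) (z : Fin dz → ℝ) (y w : ℝ),
      σ' c z y w = Ψ' c (y + ∑ k, z k * β' k, w + ∑ k, z k * γ' k))
    (heq : ∀ (c : Fin C) (z : Fin dz → ℝ) (y w : ℝ), σ c z y w = σ' c z y w)
    (hrank : ∃ (z : Fin dz → ℝ) (y w : ℝ),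
      (Matrix.of fun (c : Fin C) (j : Fin 2) =>
        if j = 0 then deriv (fun t => σ c z t w) y
        else deriv (fun t => σ c z y t) w).rank = 2) :
    β = β' ∧ γ = γ' := by
  obtain ⟨z0, y0, w0, hrk⟩ := hrank
  set Sβ := ∑ k, z0 k * β k with hSβ
  set Sγ := ∑ k, z0 k * γ k with hSγ
  set Sβ' := ∑ k, z0 k * β' k with hSβ'
  set Sγ' := ∑ k, z0 k * γ' k with hSγ'
  set P : Fin C → (ℝ × ℝ) →L[ℝ] ℝ := fun c => fderiv ℝ (Ψ c) (y0 + Sβ, w0 + Sγ) with hP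
  set Q : Fin C → (ℝ × ℝ) →L[ℝ] ℝ := fun c => fderiv ℝ (Ψ' c) (y0 + Sβ', w0 + Sγ') with hQ
  -- derivative in y
  have dy : ∀ c, HasDerivAt (fun t => σ c z0 t w0) (P c (1, 0)) y0 := by
    intro c
    have h := key_deriv (Ψ c) (hΨ c) Sβ (w0 + Sγ) 1 0 y0 (y0 + Sβ, w0 + Sγ) (by rw [add_comm y0 Sβ]; simp)
    simp only [mul_one, mul_zero, add_zero] at h
    have hf : (fun t => σ c z0 t w0) = fun t => Ψ c (Sβ + t, w0 + Sγ) := by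
      funext t; rw [hσ, add_comm t Sβ]
    rw [hf]
    exact h
  have dy' : ∀ c, HasDerivAt (fun t => σ' c z0 t w0) (Q c (1, 0)) y0 := by
    intro c
    have h := key_deriv (Ψ' c) (hΨ' c) Sβ' (w0 + Sγ') 1 0 y0 (y0 + Sβ', w0 + Sγ') (by rw [add_comm y0 Sβ']; simp)
    simp only [mul_one, mul_zero, add_zero] at h
    have hf : (fun t => σ' c z0 t w0) = fun t => Ψ' c (Sβ' + t, w0 + Sγ') := by
      funext t; rw [hσ', add_comm t Sβ']
    rw [hf]
    exact h
  have dw : ∀ c, HasDerivAt (fun t => σ c z0 y0 t) (P c (0, 1)) w0 := by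
    intro c
    have h := key_deriv (Ψ c) (hΨ c) (y0 + Sβ) Sγ 0 1 w0 (y0 + Sβ, w0 + Sγ) (by rw [add_comm w0 Sγ]; simp)
    simp only [mul_one, mul_zero, add_zero] at h
    have hf : (fun t => σ c z0 y0 t) = fun t => Ψ c (y0 + Sβ, Sγ + t) := by
      funext t; rw [hσ, add_comm t Sγ]
    rw [hf]
    exact h
  have dw' : ∀ c, HasDerivAt (fun t => σ' c z0 y0 t) (Q c (0, 1)) w0 := by
    intro c
    have h := key_deriv (Ψ' c) (hΨ' c) (y0 + Sβ') Sγ' 0 1 w0 (y0 + Sβ', w0 + Sγ') (by rw [add_comm w0 Sγ']; simp)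
    simp only [mul_one, mul_zero, add_zero] at h
    have hf : (fun t => σ' c z0 y0 t) = fun t => Ψ' c (y0 + Sβ', Sγ' + t) := by
      funext t; rw [hσ', add_comm t Sγ']
    rw [hf]
    exact h
  -- equality of first partials
  have hy : ∀ c, P c (1, 0) = Q c (1, 0) := by
    intro c
    have hfun : (fun t => σ c z0 t w0) = fun t => σ' c z0 t w0 := funext fun t => heq c z0 t w0
    have := (dy c).deriv
    rw [hfun] at this
    rw [← this, (dy' c).deriv]
  have hw : ∀ c, P c (0, 1) = Q c (0, 1) := by
    intro c
    have hfun : (fun t => σ c z0 y0 t) = fun t => σ' c z0 y0 t := funext fun t => heq c z0 y0 t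
    have := (dw c).deriv
    rw [hfun] at this
    rw [← this, (dw' c).deriv]
  -- derivative in z_k direction
  have hsum : ∀ (δ : Fin dz → ℝ) (k : Fin dz) (t : ℝ),
      ∑ j, (z0 j + t * (if j = k then (1:ℝ) else 0)) * δ j
        = (∑ j, z0 j * δ j) + t * δ k := by
    intro δ k t
    rw [Finset.sum_congr rfl (fun j _ => add_mul (z0 j) _ (δ j)), Finset.sum_add_distrib]
    congr 1
    have : ∀ j : Fin dz, (t * (if j = k then (1:ℝ) else 0)) * δ j
        = if j = k then t * δ k else 0 := by
      intro j
      by_cases h : j = k <;> simp [h]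
    rw [Finset.sum_congr rfl (fun j _ => this j), Finset.sum_ite_eq' Finset.univ k]
    simp
  have hk : ∀ c k, P c (β k, γ k) = Q c (β' k, γ' k) := by
    intro c k
    have dP : HasDerivAt (fun t => σ c (fun j => z0 j + t * (if j = k then (1:ℝ) else 0)) y0 w0)
        (P c (β k, γ k)) 0 := by
      have h := key_deriv (Ψ c) (hΨ c) (y0 + Sβ) (w0 + Sγ) (β k) (γ k) 0 (y0 + Sβ, w0 + Sγ) (by simp)
      have hf : (fun t => σ c (fun j => z0 j + t * (if j = k then (1:ℝ) else 0)) y0 w0)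
          = fun t => Ψ c ((y0 + Sβ) + t * β k, (w0 + Sγ) + t * γ k) := by
        funext t; rw [hσ, hsum β k t, hsum γ k t, ← hSβ, ← hSγ, add_assoc, add_assoc]
      rw [hf]; exact h
    have dQ : HasDerivAt (fun t => σ' c (fun j => z0 j + t * (if j = k then (1:ℝ) else 0)) y0 w0)
        (Q c (β' k, γ' k)) 0 := by
      have h := key_deriv (Ψ' c) (hΨ' c) (y0 + Sβ') (w0 + Sγ') (β' k) (γ' k) 0 (y0 + Sβ', w0 + Sγ') (by simp)
      have hf : (fun t => σ' c (fun j => z0 j + t * (if j = k then (1:ℝ) else 0)) y0 w0)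
          = fun t => Ψ' c ((y0 + Sβ') + t * β' k, (w0 + Sγ') + t * γ' k) := by
        funext t; rw [hσ', hsum β' k t, hsum γ' k t, ← hSβ', ← hSγ', add_assoc, add_assoc]
      rw [hf]; exact h
    have hfun : (fun t => σ c (fun j => z0 j + t * (if j = k then (1:ℝ) else 0)) y0 w0)
        = fun t => σ' c (fun j => z0 j + t * (if j = k then (1:ℝ) else 0)) y0 w0 :=
      funext fun t => heq c _ y0 w0
    have h1 := dP.deriv
    rw [hfun] at h1
    rw [← h1, dQ.deriv]
  -- now the matrix
  set M : Matrix (Fin C) (Fin 2) ℝ := Matrix.of fun (c : Fin C) (j : Fin 2) =>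
      if j = 0 then deriv (fun t => σ c z0 t w0) y0
      else deriv (fun t => σ c z0 y0 t) w0 with hM
  have hMent : ∀ c, M c 0 = P c (1, 0) ∧ M c 1 = P c (0, 1) := by
    intro c
    constructor
    · simp [hM, (dy c).deriv]
    · simp [hM, (dw c).deriv]
  -- kernel element
  have hker : ∀ k, M.mulVec ![β k - β' k, γ k - γ' k] = 0 := by
    intro k
    funext c
    have decomp : ∀ (x y : ℝ), (x, y) = x • ((1:ℝ), (0:ℝ)) + y • ((0:ℝ), (1:ℝ)) := by
      intro x y; simp [Prod.ext_iff]
    have hPxy : ∀ x y : ℝ, P c (x, y) = x * P c (1, 0) + y * P c (0, 1) := by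
      intro x y; conv_lhs => rw [decomp x y]
      rw [map_add, map_smul, map_smul]; simp
    have hQxy : ∀ x y : ℝ, Q c (x, y) = x * Q c (1, 0) + y * Q c (0, 1) := by
      intro x y; conv_lhs => rw [decomp x y]
      rw [map_add, map_smul, map_smul]; simp
    have key : (β k - β' k) * P c (1, 0) + (γ k - γ' k) * P c (0, 1) = 0 := by
      have h1 := hk c k
      rw [hPxy, hQxy, ← hy c, ← hw c] at h1
      ring_nf
      ring_nf at h1
      linarith
    have : M.mulVec ![β k - β' k, γ k - γ' k] c
        = M c 0 * (β k - β' k) + M c 1 * (γ k - γ' k) := by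
      simp [Matrix.mulVec, dotProduct, Fin.sum_univ_two, Matrix.vecHead, Matrix.vecTail]
    rw [this, (hMent c).1, (hMent c).2]
    simp only [Pi.zero_apply]
    linarith [key]
  -- rank implies trivial kernel
  have hkerbot : LinearMap.ker M.mulVecLin = ⊥ := by
    have hadd := LinearMap.finrank_range_add_finrank_ker M.mulVecLin
    have hdom : Module.finrank ℝ (Fin 2 → ℝ) = 2 := by simp
    rw [hdom] at hadd
    have hrk' : Module.finrank ℝ (LinearMap.range M.mulVecLin) = 2 := hrk
    have : Module.finrank ℝ (LinearMap.ker M.mulVecLin) = 0 := by omega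
    exact Submodule.finrank_eq_zero.mp this
  have hzero : ∀ k, (![β k - β' k, γ k - γ' k] : Fin 2 → ℝ) = 0 := by
    intro k
    have : (![β k - β' k, γ k - γ' k] : Fin 2 → ℝ) ∈ LinearMap.ker M.mulVecLin := by
      simpa [Matrix.mulVecLin] using hker k
    rw [hkerbot] at this
    simpa using this
  constructor
  · funext k
    have := congrFun (hzero k) 0
    simp at this; linarith
  · funext k
    have := congrFun (hzero k) 1
    simp at this; linarith
end

section
/- Let μ and ν be Borel probability measures on ℝ⁴ such that Λ₀^μ(τ_1,τ_2,ι_1,ι_2) = Λ₀^ν(τ_1,τ_2,ι_1,ι_2) for every (τ_1,τ_2,ι_1,ι_2) ∈ ℝ⁴. Then for all a_1, a_2, b_1, b_2 ∈ ℝ, μ{(ε_1,ε_2,η_1,η_2) ∈ ℝ⁴ : ε_1 < a_1, ε_2 < a_2, η_1 < b_1, η_2 < b_2} = ν{(ε_1,ε_2,η_1,η_2) ∈ ℝ⁴ : ε_1 < a_1, ε_2 < a_2, η_1 < b_1, η_2 < b_2}; consequently μ = ν. -/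
open MeasureTheory Set Filter Topology

section Helpers

lemma eq_of_iInter {α : Type*} [MeasurableSpace α] (μ ν : Measure α)
    [IsFiniteMeasure μ] [IsFiniteMeasure ν]
    (s : ℕ → Set α) (hs : ∀ n, MeasurableSet (s n)) (hanti : Antitone s)
    (heq : ∀ n, μ (s n) = ν (s n)) : μ (⋂ n, s n) = ν (⋂ n, s n) := by
  have h1 : Tendsto (μ ∘ s) atTop (𝓝 (μ (⋂ n, s n))) :=
    tendsto_measure_iInter_atTop (fun n => (hs n).nullMeasurableSet) hanti
      ⟨0, measure_ne_top μ _⟩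
  have h2 : Tendsto (ν ∘ s) atTop (𝓝 (ν (⋂ n, s n))) :=
    tendsto_measure_iInter_atTop (fun n => (hs n).nullMeasurableSet) hanti
      ⟨0, measure_ne_top ν _⟩
  have he : (μ ∘ s) = (ν ∘ s) := funext heq
  exact tendsto_nhds_unique (he ▸ h1) h2

/-- coordinate sublevel sets -/
def coordLt (i : Fin 4) (a : ℝ) : Set (Fin 4 → ℝ) := {x | x i < a}

lemma mem_coordLt {i : Fin 4} {a : ℝ} {x : Fin 4 → ℝ} : x ∈ coordLt i a ↔ x i < a := Iff.rfl

lemma measurable_coordLt (i : Fin 4) (a : ℝ) : MeasurableSet (coordLt i a) :=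
  measurableSet_lt (measurable_pi_apply i) measurable_const

lemma coordLt_mono (i : Fin 4) : Monotone (coordLt i) := fun _ _ hab _ hx =>
  lt_of_lt_of_le hx hab

lemma coordLt_neg_anti (i : Fin 4) : Antitone (fun n : ℕ => coordLt i (-(n : ℝ))) :=
  fun m n hmn => coordLt_mono i (neg_le_neg (Nat.cast_le.mpr hmn))

end Helpers


/-- For a Borel probability measure `μ` on `ℝ⁴` (coordinates
`(ε_1, ε_2, η_1, η_2) = (x 0, x 1, x 2, x 3)`), the conditional probability of
being unmatched in the two-college model with student indices `(τ_1,τ_2)`,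
college indices `(ι_1,ι_2)`, and both cutoffs normalized to zero:
`Λ₀^μ(τ_1,τ_2,ι_1,ι_2) = μ{(ε_1 < −τ_1 ∨ η_1 < −ι_1) ∧ (ε_2 < −τ_2 ∨ η_2 < −ι_2)}`. -/
noncomputable def Lam0 (μ : Measure (Fin 4 → ℝ)) (τ1 τ2 ι1 ι2 : ℝ) : ℝ :=
  (μ {x : Fin 4 → ℝ | (x 0 < -τ1 ∨ x 2 < -ι1) ∧ (x 1 < -τ2 ∨ x 3 < -ι2)}).toReal

/-- Proposition 2, `C = 2`: if two Borel probability measures on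
`ℝ⁴` induce the same unmatched probability `Λ₀` everywhere, then they assign
the same mass to all open lower orthants, and consequently they are equal. -/
theorem stmt_7 (μ ν : Measure (Fin 4 → ℝ))
    [IsProbabilityMeasure μ] [IsProbabilityMeasure ν]
    (h : ∀ τ1 τ2 ι1 ι2 : ℝ, Lam0 μ τ1 τ2 ι1 ι2 = Lam0 ν τ1 τ2 ι1 ι2) :
    (∀ a1 a2 b1 b2 : ℝ,
      μ {x : Fin 4 → ℝ | x 0 < a1 ∧ x 1 < a2 ∧ x 2 < b1 ∧ x 3 < b2} =
        ν {x : Fin 4 → ℝ | x 0 < a1 ∧ x 1 < a2 ∧ x 2 < b1 ∧ x 3 < b2}) ∧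
    μ = ν := by
  have mP : ∀ (i : Fin 4) a, MeasurableSet (coordLt i a) := measurable_coordLt
  set P := coordLt 0
  set R := coordLt 1
  set Q := coordLt 2
  set T := coordLt 3
  -- base: equality on the unmatched sets
  have base : ∀ a b c d : ℝ, μ ((P a ∪ Q b) ∩ (R c ∪ T d)) = ν ((P a ∪ Q b) ∩ (R c ∪ T d)) := by
    intro a b c d
    have hh := h (-a) (-c) (-b) (-d)
    simp only [Lam0, neg_neg] at hh
    have hset : {x : Fin 4 → ℝ | (x 0 < a ∨ x 2 < b) ∧ (x 1 < c ∨ x 3 < d)} =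
        (P a ∪ Q b) ∩ (R c ∪ T d) := rfl
    rw [hset] at hh
    exact (ENNReal.toReal_eq_toReal_iff' (measure_ne_top μ _) (measure_ne_top ν _)).mp hh
  -- E1 : strip Q
  have E1 : ∀ a c d : ℝ, μ (P a ∩ (R c ∪ T d)) = ν (P a ∩ (R c ∪ T d)) := by
    intro a c d
    have hI : (⋂ n : ℕ, (P a ∪ Q (-(n : ℝ))) ∩ (R c ∪ T d)) = P a ∩ (R c ∪ T d) := by
      ext x
      simp only [mem_iInter, mem_inter_iff, mem_union, mem_coordLt]
      constructor
      · intro hx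
        obtain ⟨n, hn⟩ := exists_nat_gt (-x 2)
        rcases (hx n).1 with h' | h'
        · exact ⟨h', (hx 0).2⟩
        · exact absurd (show x 2 < -(n:ℝ) from h') (not_lt.mpr (by linarith))
      · exact fun hx n => ⟨Or.inl hx.1, hx.2⟩
    rw [← hI]
    exact eq_of_iInter μ ν _
      (fun n => ((mP 0 a).union (mP 2 _)).inter ((mP 1 c).union (mP 3 d)))
      (fun m n hmn => inter_subset_inter_left _
        (union_subset_union_right _ (coordLt_neg_anti 2 hmn)))
      (fun n => base _ _ _ _)
  -- E2 : strip P
  have E2 : ∀ b c d : ℝ, μ (Q b ∩ (R c ∪ T d)) = ν (Q b ∩ (R c ∪ T d)) := by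
    intro b c d
    have hI : (⋂ n : ℕ, (P (-(n : ℝ)) ∪ Q b) ∩ (R c ∪ T d)) = Q b ∩ (R c ∪ T d) := by
      ext x
      simp only [mem_iInter, mem_inter_iff, mem_union, mem_coordLt]
      constructor
      · intro hx
        obtain ⟨n, hn⟩ := exists_nat_gt (-x 0)
        rcases (hx n).1 with h' | h'
        · exact absurd (show x 0 < -(n:ℝ) from h') (not_lt.mpr (by linarith))
        · exact ⟨h', (hx 0).2⟩
      · exact fun hx n => ⟨Or.inr hx.1, hx.2⟩
    rw [← hI]
    exact eq_of_iInter μ ν _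
      (fun n => ((mP 0 _).union (mP 2 b)).inter ((mP 1 c).union (mP 3 d)))
      (fun m n hmn => inter_subset_inter_left _
        (union_subset_union_left _ (coordLt_neg_anti 0 hmn)))
      (fun n => base _ _ _ _)
  -- E4 : P and Q jointly, via inclusion-exclusion
  have E4 : ∀ a b c d : ℝ, μ (P a ∩ Q b ∩ (R c ∪ T d)) = ν (P a ∩ Q b ∩ (R c ∪ T d)) := by
    intro a b c d
    set U := R c ∪ T d with hU
    have hid : ∀ m : Measure (Fin 4 → ℝ),
        m ((P a ∪ Q b) ∩ U) + m (P a ∩ Q b ∩ U) = m (P a ∩ U) + m (Q b ∩ U) := by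
      intro m
      have := measure_union_add_inter (μ := m) (P a ∩ U) ((mP 2 b).inter ((mP 1 c).union (mP 3 d)))
      have hu : (P a ∩ U) ∪ (Q b ∩ U) = (P a ∪ Q b) ∩ U := (union_inter_distrib_right _ _ _).symm
      have hi : (P a ∩ U) ∩ (Q b ∩ U) = P a ∩ Q b ∩ U := by
        ext x; simp only [mem_inter_iff]; tauto
      rw [hu, hi] at this
      exact this
    have h1 := hid μ
    have h2 := hid ν
    rw [base a b c d, E1 a c d, E2 b c d] at h1
    exact (ENNReal.add_right_inj (measure_ne_top ν _)).mp (h1.trans h2.symm)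
  -- E5 : strip T
  have E5 : ∀ a b c : ℝ, μ (P a ∩ Q b ∩ R c) = ν (P a ∩ Q b ∩ R c) := by
    intro a b c
    have hI : (⋂ n : ℕ, P a ∩ Q b ∩ (R c ∪ T (-(n : ℝ)))) = P a ∩ Q b ∩ R c := by
      ext x
      simp only [mem_iInter, mem_inter_iff, mem_union, mem_coordLt]
      constructor
      · intro hx
        obtain ⟨n, hn⟩ := exists_nat_gt (-x 3)
        rcases (hx n).2 with h' | h'
        · exact ⟨(hx 0).1, h'⟩
        · exact absurd (show x 3 < -(n:ℝ) from h') (not_lt.mpr (by linarith))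
      · exact fun hx n => ⟨hx.1, Or.inl hx.2⟩
    rw [← hI]
    exact eq_of_iInter μ ν _
      (fun n => ((mP 0 a).inter (mP 2 b)).inter ((mP 1 c).union (mP 3 _)))
      (fun m n hmn => inter_subset_inter_right _
        (union_subset_union_right _ (coordLt_neg_anti 3 hmn)))
      (fun n => E4 _ _ _ _)
  -- E6 : strip R
  have E6 : ∀ a b d : ℝ, μ (P a ∩ Q b ∩ T d) = ν (P a ∩ Q b ∩ T d) := by
    intro a b d
    have hI : (⋂ n : ℕ, P a ∩ Q b ∩ (R (-(n : ℝ)) ∪ T d)) = P a ∩ Q b ∩ T d := by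
      ext x
      simp only [mem_iInter, mem_inter_iff, mem_union, mem_coordLt]
      constructor
      · intro hx
        obtain ⟨n, hn⟩ := exists_nat_gt (-x 1)
        rcases (hx n).2 with h' | h'
        · exact absurd (show x 1 < -(n:ℝ) from h') (not_lt.mpr (by linarith))
        · exact ⟨(hx 0).1, h'⟩
      · exact fun hx n => ⟨hx.1, Or.inr hx.2⟩
    rw [← hI]
    exact eq_of_iInter μ ν _
      (fun n => ((mP 0 a).inter (mP 2 b)).inter ((mP 1 _).union (mP 3 d)))
      (fun m n hmn => inter_subset_inter_right _
        (union_subset_union_left _ (coordLt_neg_anti 1 hmn)))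
      (fun n => E4 _ _ _ _)
  -- final orthant equality
  have orth : ∀ a b c d : ℝ, μ (P a ∩ Q b ∩ R c ∩ T d) = ν (P a ∩ Q b ∩ R c ∩ T d) := by
    intro a b c d
    have hid : ∀ m : Measure (Fin 4 → ℝ),
        m (P a ∩ Q b ∩ (R c ∪ T d)) + m (P a ∩ Q b ∩ R c ∩ T d) =
          m (P a ∩ Q b ∩ R c) + m (P a ∩ Q b ∩ T d) := by
      intro m
      have := measure_union_add_inter (μ := m) (P a ∩ Q b ∩ R c)
        (((mP 0 a).inter (mP 2 b)).inter (mP 3 d))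
      have hu : (P a ∩ Q b ∩ R c) ∪ (P a ∩ Q b ∩ T d) = P a ∩ Q b ∩ (R c ∪ T d) := by
        ext x; simp only [mem_inter_iff, mem_union]; tauto
      have hi : (P a ∩ Q b ∩ R c) ∩ (P a ∩ Q b ∩ T d) = P a ∩ Q b ∩ R c ∩ T d := by
        ext x; simp only [mem_inter_iff]; tauto
      rw [hu, hi] at this
      exact this
    have h1 := hid μ
    have h2 := hid ν
    rw [E4 a b c d, E5 a b c, E6 a b d] at h1
    exact (ENNReal.add_right_inj (measure_ne_top ν _)).mp (h1.trans h2.symm)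
  have main : ∀ a1 a2 b1 b2 : ℝ,
      μ {x : Fin 4 → ℝ | x 0 < a1 ∧ x 1 < a2 ∧ x 2 < b1 ∧ x 3 < b2} =
        ν {x : Fin 4 → ℝ | x 0 < a1 ∧ x 1 < a2 ∧ x 2 < b1 ∧ x 3 < b2} := by
    intro a1 a2 b1 b2
    have hset : {x : Fin 4 → ℝ | x 0 < a1 ∧ x 1 < a2 ∧ x 2 < b1 ∧ x 3 < b2} =
        P a1 ∩ Q b1 ∩ R a2 ∩ T b2 := by
      ext x; simp only [mem_setOf_eq, mem_inter_iff, mem_coordLt]; tauto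
    rw [hset]
    exact orth _ _ _ _
  refine ⟨main, ?_⟩
  -- extensionality via the π-system of open lower orthants
  have hgen : (inferInstance : MeasurableSpace (Fin 4 → ℝ)) =
      MeasurableSpace.generateFrom
        (univ.pi '' univ.pi fun _ : Fin 4 => range (Iio : ℝ → Set ℝ)) := by
    refine (generateFrom_eq_pi (fun _ => ?_) (fun _ => ?_)).symm
    · exact (borel_eq_generateFrom_Iio ℝ).symm
    · exact ⟨fun n => Iio (n : ℝ), fun n => mem_range_self _, by
        ext x; simp only [mem_iUnion, mem_Iio, mem_univ, iff_true]; exact exists_nat_gt x⟩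
  refine ext_of_generate_finite _ hgen (IsPiSystem.pi fun _ => isPiSystem_Iio) ?_ (by simp)
  rintro s ⟨t, ht, rfl⟩
  choose f hf using fun i => ht i (mem_univ i)
  have hset : univ.pi t =
      {x : Fin 4 → ℝ | x 0 < f 0 ∧ x 1 < f 1 ∧ x 2 < f 2 ∧ x 3 < f 3} := by
    ext x
    simp only [mem_univ_pi, mem_setOf_eq]
    constructor
    · intro hx
      have h0 := hx 0; have h1 := hx 1; have h2 := hx 2; have h3 := hx 3
      rw [← hf] at h0 h1 h2 h3
      exact ⟨h0, h1, h2, h3⟩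
    · rintro ⟨h0, h1, h2, h3⟩ i
      fin_cases i <;> rw [← hf] at * <;> assumption
  rw [hset]
  exact main _ _ _ _
end

section
/- Suppose (Λ₀, ũ, ṽ) and (Λ̄₀, ū, v̄) are two nonseparable matching models in inverse form (as in the context) that induce the SAME function σ₀ on ℝ^{d_z}×ℝ^C×ℝ^C×ℝ, and that ∂ũ^c/∂y_c and ∂ū^c/∂y_c never vanish for c ∈ {2,…,C}, and ∂ṽ^c/∂w_c and ∂v̄^c/∂w_c never vanish for c ∈ {1,…,C}. Fix z ∈ ℝ^{d_z}, w ∈ ℝ^C, y_2,…,y_C ∈ ℝ, and a ∈ ℝ. Assume: (i) there exist C values y_1^1,…,y_1^C ∈ ℝ such that the C×C matrix whose m-th row is the gradient of σ₀ with respect to (y_1,…,y_C) evaluated at (z,(y_1^m,y_2,…,y_C),w,a) is invertible; (ii) there exist 2C values ŷ_1^1,…,ŷ_1^{2C} ∈ ℝ such that the 2C×2C matrix whose m-th row is the gradient of σ₀ with respect to (y_1,…,y_C,w_1,…,w_C) evaluated at (z,(ŷ_1^m,y_2,…,y_C),w,a) is invertible. Then: (∂ũ^1/∂a)(z,a) =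 (∂ū^1/∂a)(z,a); for every c ∈ {2,…,C}, (∂ũ^c/∂y_c)^{-1}(∂ũ^c/∂a) = (∂ū^c/∂y_c)^{-1}(∂ū^c/∂a) at (z,y_c,a); and for every k ∈ {1,…,d_z}: (∂ũ^1/∂z_k)(z,a) = (∂ū^1/∂z_k)(z,a), (∂ũ^c/∂y_c)^{-1}(∂ũ^c/∂z_k) = (∂ū^c/∂y_c)^{-1}(∂ū^c/∂z_k) at (z,y_c,a) for every c ∈ {2,…,C}, and (∂ṽ^c/∂w_c)^{-1}(∂ṽ^c/∂z_k) = (∂v̄^c/∂w_c)^{-1}(∂v̄^c/∂z_k) at (z,w_c) for every c ∈ {1,…,C}. -/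
/-- The conditional probability of being unmatched in the nonseparable matching
model in inverse form:
`σ₀(z,y,w,a) = Λ₀(ũ¹(z,a) − y_1, ũ²(z,y_2,a), …, ũ^C(z,y_C,a), ṽ¹(z,w_1), …, ṽ^C(z,w_C))`.
College `1` is the index `0 : Fin C`; `ut1` is `ũ¹`, `ut c` is `ũ^c` for
`c ≠ 0`, and `vt c` is `ṽ^c`. -/
noncomputable def sigma0NS (C dz : ℕ) [NeZero C]
    (Λ : ((Fin C → ℝ) × (Fin C → ℝ)) → ℝ)
    (ut1 : (Fin dz → ℝ) → ℝ → ℝ)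
    (ut : Fin C → (Fin dz → ℝ) → ℝ → ℝ → ℝ)
    (vt : Fin C → (Fin dz → ℝ) → ℝ → ℝ)
    (z : Fin dz → ℝ) (y w : Fin C → ℝ) (a : ℝ) : ℝ :=
  Λ (fun c => if c = 0 then ut1 z a - y 0 else ut c z (y c) a,
     fun c => vt c z (w c))

set_option linter.unusedSectionVars false

section Aux

variable {C dz : ℕ} [NeZero C]
variable (Λ : ((Fin C → ℝ) × (Fin C → ℝ)) → ℝ)
variable (ut1 : (Fin dz → ℝ) → ℝ → ℝ)
variable (ut : Fin C → (Fin dz → ℝ) → ℝ → ℝ → ℝ)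
variable (vt : Fin C → (Fin dz → ℝ) → ℝ → ℝ)

noncomputable def nsPt (z : Fin dz → ℝ) (y w : Fin C → ℝ) (a : ℝ) :
    (Fin C → ℝ) × (Fin C → ℝ) :=
  (fun c => if c = 0 then ut1 z a - y 0 else ut c z (y c) a, fun c => vt c z (w c))

lemma nsDerivY (hΛ : ContDiff ℝ 1 Λ)
    (hut : ∀ c : Fin C, c ≠ 0 →
      ContDiff ℝ 1 (fun p : (Fin dz → ℝ) × ℝ × ℝ => ut c p.1 p.2.1 p.2.2))
    (z : Fin dz → ℝ) (y w : Fin C → ℝ) (a : ℝ) (d : Fin C) :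
    HasDerivAt (fun t => sigma0NS C dz Λ ut1 ut vt z (Function.update y d t) w a)
      (fderiv ℝ Λ (nsPt ut1 ut vt z y w a)
        (Pi.single d (if d = 0 then (-1 : ℝ) else deriv (fun t => ut d z t a) (y d)), 0))
      (y d) := by
  set cd : ℝ := if d = 0 then (-1 : ℝ) else deriv (fun t => ut d z t a) (y d) with hcd
  set inner : ℝ → (Fin C → ℝ) × (Fin C → ℝ) := fun t =>
    (fun c => if c = 0 then ut1 z a - Function.update y d t 0
      else ut c z (Function.update y d t c) a, fun c => vt c z (w c)) with hinner
  have hin : HasDerivAt inner (Pi.single d cd, 0) (y d) := by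
    refine HasDerivAt.prodMk ?_ (hasDerivAt_const _ _)
    rw [hasDerivAt_pi]
    intro i
    by_cases hid : i = d
    · subst hid
      by_cases h0 : i = 0
      · subst h0
        simp only [if_pos rfl, Function.update_self, Pi.single_eq_same, hcd]
        simpa using (hasDerivAt_id (y (0 : Fin C))).const_sub (ut1 z a)
      · simp only [if_neg h0, Function.update_self, Pi.single_eq_same, hcd]
        have hdiff : DifferentiableAt ℝ (fun t => ut i z t a) (y i) := by
          have h1 : DifferentiableAt ℝ
              (fun t : ℝ => ((z, t, a) : (Fin dz → ℝ) × ℝ × ℝ)) (y i) :=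
            (differentiableAt_const _).prodMk
              (differentiableAt_fun_id.prodMk (differentiableAt_const _))
          exact (((hut i h0).differentiable one_ne_zero) (z, y i, a)).comp (y i) h1
        exact hdiff.hasDerivAt
    · have hsingle : (Pi.single d cd : Fin C → ℝ) i = 0 := by simp [Pi.single_eq_of_ne, hid]
      rw [hsingle]
      by_cases h0 : i = 0
      · subst h0
        simp only [if_pos rfl, Function.update_of_ne hid]
        exact hasDerivAt_const _ _
      · simp only [if_neg h0, Function.update_of_ne hid]
        exact hasDerivAt_const _ _
  have hΛd := (hΛ.differentiable one_ne_zero (inner (y d))).hasFDerivAt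
  have hcomp := hΛd.comp_hasDerivAt (y d) hin
  have h2 : inner (y d) = nsPt ut1 ut vt z y w a := by
    simp [hinner, nsPt, Function.update_eq_self]
  rw [h2] at hcomp
  exact hcomp

lemma nsDerivW (hΛ : ContDiff ℝ 1 Λ)
    (hvt : ∀ c : Fin C, ContDiff ℝ 1 (fun p : (Fin dz → ℝ) × ℝ => vt c p.1 p.2))
    (z : Fin dz → ℝ) (y w : Fin C → ℝ) (a : ℝ) (d : Fin C) :
    HasDerivAt (fun t => sigma0NS C dz Λ ut1 ut vt z y (Function.update w d t) a)
      (fderiv ℝ Λ (nsPt ut1 ut vt z y w a)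
        (0, Pi.single d (deriv (fun t => vt d z t) (w d))))
      (w d) := by
  set inner : ℝ → (Fin C → ℝ) × (Fin C → ℝ) := fun t =>
    (fun c => if c = 0 then ut1 z a - y 0 else ut c z (y c) a,
     fun c => vt c z (Function.update w d t c)) with hinner
  have hin : HasDerivAt inner (0, Pi.single d (deriv (fun t => vt d z t) (w d))) (w d) := by
    refine HasDerivAt.prodMk (hasDerivAt_const _ _) ?_
    rw [hasDerivAt_pi]
    intro i
    by_cases hid : i = d
    · subst hid
      simp only [Function.update_self, Pi.single_eq_same]
      have hdiff : DifferentiableAt ℝ (fun t => vt i z t) (w i) := by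
        have h1 : DifferentiableAt ℝ
            (fun t : ℝ => ((z, t) : (Fin dz → ℝ) × ℝ)) (w i) :=
          (differentiableAt_const _).prodMk differentiableAt_fun_id
        exact (((hvt i).differentiable one_ne_zero) (z, w i)).comp (w i) h1
      exact hdiff.hasDerivAt
    · have hsingle : (Pi.single d (deriv (fun t => vt d z t) (w d)) : Fin C → ℝ) i = 0 := by simp [Pi.single_eq_of_ne, hid]
      rw [hsingle]
      simp only [Function.update_of_ne hid]
      exact hasDerivAt_const _ _
  have hΛd := (hΛ.differentiable one_ne_zero (inner (w d))).hasFDerivAt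
  have hcomp := hΛd.comp_hasDerivAt (w d) hin
  have h2 : inner (w d) = nsPt ut1 ut vt z y w a := by
    simp [hinner, nsPt, Function.update_eq_self]
  rw [h2] at hcomp
  exact hcomp

lemma nsDerivA (hΛ : ContDiff ℝ 1 Λ)
    (hut1 : ContDiff ℝ 1 (fun p : (Fin dz → ℝ) × ℝ => ut1 p.1 p.2))
    (hut : ∀ c : Fin C, c ≠ 0 →
      ContDiff ℝ 1 (fun p : (Fin dz → ℝ) × ℝ × ℝ => ut c p.1 p.2.1 p.2.2))
    (z : Fin dz → ℝ) (y w : Fin C → ℝ) (a : ℝ) :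
    HasDerivAt (fun t => sigma0NS C dz Λ ut1 ut vt z y w t)
      (fderiv ℝ Λ (nsPt ut1 ut vt z y w a)
        ((fun c => if c = 0 then deriv (fun t => ut1 z t) a
          else deriv (fun t => ut c z (y c) t) a), 0))
      a := by
  set inner : ℝ → (Fin C → ℝ) × (Fin C → ℝ) := fun t =>
    (fun c => if c = 0 then ut1 z t - y 0 else ut c z (y c) t,
     fun c => vt c z (w c)) with hinner
  have hin : HasDerivAt inner
      ((fun c => if c = 0 then deriv (fun t => ut1 z t) a
        else deriv (fun t => ut c z (y c) t) a), 0) a := by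
    refine HasDerivAt.prodMk ?_ (hasDerivAt_const _ _)
    rw [hasDerivAt_pi]
    intro i
    by_cases h0 : i = 0
    · subst h0
      simp only [if_pos rfl]
      have hdiff : DifferentiableAt ℝ (fun t => ut1 z t) a := by
        have h1 : DifferentiableAt ℝ
            (fun t : ℝ => ((z, t) : (Fin dz → ℝ) × ℝ)) a :=
          (differentiableAt_const _).prodMk differentiableAt_fun_id
        exact ((hut1.differentiable one_ne_zero) (z, a)).comp a h1
      exact hdiff.hasDerivAt.sub_const (y 0)
    · simp only [if_neg h0]
      have hdiff : DifferentiableAt ℝ (fun t => ut i z (y i) t) a := by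
        have h1 : DifferentiableAt ℝ
            (fun t : ℝ => ((z, y i, t) : (Fin dz → ℝ) × ℝ × ℝ)) a :=
          (differentiableAt_const _).prodMk
            ((differentiableAt_const _).prodMk differentiableAt_fun_id)
        exact (((hut i h0).differentiable one_ne_zero) (z, y i, a)).comp
          (f := fun t : ℝ => ((z, y i, t) : (Fin dz → ℝ) × ℝ × ℝ)) a h1
      exact hdiff.hasDerivAt
  have hΛd := (hΛ.differentiable one_ne_zero (inner a)).hasFDerivAt
  exact hΛd.comp_hasDerivAt a hin

lemma nsDerivZ (hΛ : ContDiff ℝ 1 Λ)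
    (hut1 : ContDiff ℝ 1 (fun p : (Fin dz → ℝ) × ℝ => ut1 p.1 p.2))
    (hut : ∀ c : Fin C, c ≠ 0 →
      ContDiff ℝ 1 (fun p : (Fin dz → ℝ) × ℝ × ℝ => ut c p.1 p.2.1 p.2.2))
    (hvt : ∀ c : Fin C, ContDiff ℝ 1 (fun p : (Fin dz → ℝ) × ℝ => vt c p.1 p.2))
    (z : Fin dz → ℝ) (y w : Fin C → ℝ) (a : ℝ) (k : Fin dz) :
    HasDerivAt (fun t => sigma0NS C dz Λ ut1 ut vt (Function.update z k t) y w a)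
      (fderiv ℝ Λ (nsPt ut1 ut vt z y w a)
        ((fun c => if c = 0 then deriv (fun t => ut1 (Function.update z k t) a) (z k)
            else deriv (fun t => ut c (Function.update z k t) (y c) a) (z k)),
         fun c => deriv (fun t => vt c (Function.update z k t) (w c)) (z k)))
      (z k) := by
  have hupd : DifferentiableAt ℝ (fun t => Function.update z k t) (z k) :=
    (hasDerivAt_update z k (z k)).differentiableAt
  set inner : ℝ → (Fin C → ℝ) × (Fin C → ℝ) := fun t =>
    (fun c => if c = 0 then ut1 (Function.update z k t) a - y 0
        else ut c (Function.update z k t) (y c) a,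
     fun c => vt c (Function.update z k t) (w c)) with hinner
  have hin : HasDerivAt inner
      ((fun c => if c = 0 then deriv (fun t => ut1 (Function.update z k t) a) (z k)
          else deriv (fun t => ut c (Function.update z k t) (y c) a) (z k)),
       fun c => deriv (fun t => vt c (Function.update z k t) (w c)) (z k)) (z k) := by
    refine HasDerivAt.prodMk ?_ ?_
    · rw [hasDerivAt_pi]
      intro i
      by_cases h0 : i = 0
      · subst h0
        simp only [if_pos rfl]
        have hdiff : DifferentiableAt ℝ
            (fun t => ut1 (Function.update z k t) a) (z k) := by
          have h1 : DifferentiableAt ℝ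
              (fun t : ℝ => ((Function.update z k t, a) : (Fin dz → ℝ) × ℝ)) (z k) :=
            hupd.prodMk (differentiableAt_const _)
          exact ((hut1.differentiable one_ne_zero) _).comp (z k) h1
        exact hdiff.hasDerivAt.sub_const (y 0)
      · simp only [if_neg h0]
        have hdiff : DifferentiableAt ℝ
            (fun t => ut i (Function.update z k t) (y i) a) (z k) := by
          have h1 : DifferentiableAt ℝ
              (fun t : ℝ => ((Function.update z k t, y i, a) : (Fin dz → ℝ) × ℝ × ℝ)) (z k) :=
            hupd.prodMk ((differentiableAt_const _).prodMk (differentiableAt_const _))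
          exact (((hut i h0).differentiable one_ne_zero) _).comp (z k) h1
        exact hdiff.hasDerivAt
    · rw [hasDerivAt_pi]
      intro i
      have hdiff : DifferentiableAt ℝ
          (fun t => vt i (Function.update z k t) (w i)) (z k) := by
        have h1 : DifferentiableAt ℝ
            (fun t : ℝ => ((Function.update z k t, w i) : (Fin dz → ℝ) × ℝ)) (z k) :=
          hupd.prodMk (differentiableAt_const _)
        exact (((hvt i).differentiable one_ne_zero) _).comp (z k) h1
      exact hdiff.hasDerivAt
  have hΛd := (hΛ.differentiable one_ne_zero (inner (z k))).hasFDerivAt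
  have hcomp := hΛd.comp_hasDerivAt (z k) hin
  have h2 : inner (z k) = nsPt ut1 ut vt z y w a := by
    simp [hinner, nsPt, Function.update_eq_self]
  rw [h2] at hcomp
  exact hcomp

lemma sum_single_fst (L : ((Fin C → ℝ) × (Fin C → ℝ)) →L[ℝ] ℝ) (g : Fin C → ℝ) :
    ∑ d, L (Pi.single d (g d), 0) = L (g, 0) := by
  have h : (∑ d, ((Pi.single d (g d), 0) : (Fin C → ℝ) × (Fin C → ℝ))) = (g, 0) := by
    rw [Prod.ext_iff]
    constructor
    · rw [Prod.fst_sum]; simpa using Finset.univ_sum_single g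
    · rw [Prod.snd_sum]; simp
  rw [← h, map_sum]

lemma sum_single_snd (L : ((Fin C → ℝ) × (Fin C → ℝ)) →L[ℝ] ℝ) (g : Fin C → ℝ) :
    ∑ d, L (0, Pi.single d (g d)) = L (0, g) := by
  have h : (∑ d, (((0 : Fin C → ℝ), Pi.single d (g d)) : (Fin C → ℝ) × (Fin C → ℝ))) = (0, g) := by
    rw [Prod.ext_iff]
    constructor
    · rw [Prod.fst_sum]; simp
    · rw [Prod.snd_sum]; simpa using Finset.univ_sum_single g
  rw [← h, map_sum]

lemma map_pair_split (L : ((Fin C → ℝ) × (Fin C → ℝ)) →L[ℝ] ℝ) (g h : Fin C → ℝ) :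
    L (g, h) = L (g, 0) + L (0, h) := by
  rw [← map_add]
  congr 1
  simp

lemma single_mul_fst (L : ((Fin C → ℝ) × (Fin C → ℝ)) →L[ℝ] ℝ) (d : Fin C) (c r : ℝ) :
    L (Pi.single d c, 0) * r = L (Pi.single d (r * c), 0) := by
  have hv : r • ((Pi.single d c : Fin C → ℝ), (0 : Fin C → ℝ)) = (Pi.single d (r * c), 0) := by
    rw [Prod.smul_mk]
    refine Prod.ext ?_ (by simp)
    simp only []
    funext j
    by_cases h : j = d
    · subst h; simp [mul_comm]
    · simp [Pi.single_eq_of_ne h]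
  rw [← hv, L.map_smul, smul_eq_mul, mul_comm]

lemma single_mul_snd (L : ((Fin C → ℝ) × (Fin C → ℝ)) →L[ℝ] ℝ) (d : Fin C) (c r : ℝ) :
    L (0, Pi.single d c) * r = L (0, Pi.single d (r * c)) := by
  have hv : r • (((0 : Fin C → ℝ)), (Pi.single d c : Fin C → ℝ)) = ((0 : Fin C → ℝ), Pi.single d (r * c)) := by
    rw [Prod.smul_mk]
    refine Prod.ext (by simp) ?_
    simp only []
    funext j
    by_cases h : j = d
    · subst h; simp [mul_comm]
    · simp [Pi.single_eq_of_ne h]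
  rw [← hv, L.map_smul, smul_eq_mul, mul_comm]


lemma nsKey1 (hΛ : ContDiff ℝ 1 Λ)
    (hut1 : ContDiff ℝ 1 (fun p : (Fin dz → ℝ) × ℝ => ut1 p.1 p.2))
    (hut : ∀ c : Fin C, c ≠ 0 →
      ContDiff ℝ 1 (fun p : (Fin dz → ℝ) × ℝ × ℝ => ut c p.1 p.2.1 p.2.2))
    (hutne : ∀ c : Fin C, c ≠ 0 → ∀ (z : Fin dz → ℝ) (yc a : ℝ),
      deriv (fun t => ut c z t a) yc ≠ 0)
    (z : Fin dz → ℝ) (y w : Fin C → ℝ) (a : ℝ) :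
    deriv (fun t => sigma0NS C dz Λ ut1 ut vt z y w t) a
      = ∑ d, (deriv (fun t => sigma0NS C dz Λ ut1 ut vt z (Function.update y d t) w a) (y d)) *
          (if d = 0 then -(deriv (fun t => ut1 z t) a)
           else (deriv (fun t => ut d z t a) (y d))⁻¹ * deriv (fun t => ut d z (y d) t) a) := by
  set L := fderiv ℝ Λ (nsPt ut1 ut vt z y w a) with hL
  have h1 : ∀ d : Fin C,
      (deriv (fun t => sigma0NS C dz Λ ut1 ut vt z (Function.update y d t) w a) (y d)) *
          (if d = 0 then -(deriv (fun t => ut1 z t) a)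
           else (deriv (fun t => ut d z t a) (y d))⁻¹ * deriv (fun t => ut d z (y d) t) a)
        = L (Pi.single d (if d = 0 then deriv (fun t => ut1 z t) a
            else deriv (fun t => ut d z (y d) t) a), 0) := by
    intro d
    rw [(nsDerivY Λ ut1 ut vt hΛ hut z y w a d).deriv, single_mul_fst]
    by_cases h0 : d = 0
    · simp only [if_pos h0]
      congr 2
      ring
    · simp only [if_neg h0]
      congr 2
      field_simp [hutne d h0 z (y d) a]
  rw [(nsDerivA Λ ut1 ut vt hΛ hut1 hut z y w a).deriv,
    Finset.sum_congr rfl (fun d _ => h1 d)]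
  exact (sum_single_fst L _).symm

lemma nsKey2 (hΛ : ContDiff ℝ 1 Λ)
    (hut1 : ContDiff ℝ 1 (fun p : (Fin dz → ℝ) × ℝ => ut1 p.1 p.2))
    (hut : ∀ c : Fin C, c ≠ 0 →
      ContDiff ℝ 1 (fun p : (Fin dz → ℝ) × ℝ × ℝ => ut c p.1 p.2.1 p.2.2))
    (hvt : ∀ c : Fin C, ContDiff ℝ 1 (fun p : (Fin dz → ℝ) × ℝ => vt c p.1 p.2))
    (hutne : ∀ c : Fin C, c ≠ 0 → ∀ (z : Fin dz → ℝ) (yc a : ℝ),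
      deriv (fun t => ut c z t a) yc ≠ 0)
    (hvtne : ∀ (c : Fin C) (z : Fin dz → ℝ) (wc : ℝ),
      deriv (fun t => vt c z t) wc ≠ 0)
    (z : Fin dz → ℝ) (y w : Fin C → ℝ) (a : ℝ) (k : Fin dz) :
    deriv (fun t => sigma0NS C dz Λ ut1 ut vt (Function.update z k t) y w a) (z k)
      = (∑ d, (deriv (fun t => sigma0NS C dz Λ ut1 ut vt z (Function.update y d t) w a) (y d)) *
          (if d = 0 then -(deriv (fun t => ut1 (Function.update z k t) a) (z k))
           else (deriv (fun t => ut d z t a) (y d))⁻¹ *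
             deriv (fun t => ut d (Function.update z k t) (y d) a) (z k)))
        + ∑ d, (deriv (fun t => sigma0NS C dz Λ ut1 ut vt z y (Function.update w d t) a) (w d)) *
          ((deriv (fun t => vt d z t) (w d))⁻¹ *
            deriv (fun t => vt d (Function.update z k t) (w d)) (z k)) := by
  set L := fderiv ℝ Λ (nsPt ut1 ut vt z y w a) with hL
  have h1 : ∀ d : Fin C,
      (deriv (fun t => sigma0NS C dz Λ ut1 ut vt z (Function.update y d t) w a) (y d)) *
          (if d = 0 then -(deriv (fun t => ut1 (Function.update z k t) a) (z k))
           else (deriv (fun t => ut d z t a) (y d))⁻¹ *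
             deriv (fun t => ut d (Function.update z k t) (y d) a) (z k))
        = L (Pi.single d (if d = 0 then deriv (fun t => ut1 (Function.update z k t) a) (z k)
            else deriv (fun t => ut d (Function.update z k t) (y d) a) (z k)), 0) := by
    intro d
    rw [(nsDerivY Λ ut1 ut vt hΛ hut z y w a d).deriv, single_mul_fst]
    by_cases h0 : d = 0
    · simp only [if_pos h0]
      congr 2
      ring
    · simp only [if_neg h0]
      congr 2
      field_simp [hutne d h0 z (y d) a]
  have h2 : ∀ d : Fin C,
      (deriv (fun t => sigma0NS C dz Λ ut1 ut vt z y (Function.update w d t) a) (w d)) *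
          ((deriv (fun t => vt d z t) (w d))⁻¹ *
            deriv (fun t => vt d (Function.update z k t) (w d)) (z k))
        = L (0, Pi.single d (deriv (fun t => vt d (Function.update z k t) (w d)) (z k))) := by
    intro d
    rw [(nsDerivW Λ ut1 ut vt hΛ hvt z y w a d).deriv, single_mul_snd]
    congr 2
    field_simp [hvtne d z (w d)]
  rw [(nsDerivZ Λ ut1 ut vt hΛ hut1 hut hvt z y w a k).deriv, map_pair_split,
    Finset.sum_congr rfl (fun d _ => h1 d), Finset.sum_congr rfl (fun d _ => h2 d)]
  rw [sum_single_fst L _, sum_single_snd L _]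


lemma nsSystem1 (hΛ : ContDiff ℝ 1 Λ)
    (hut1 : ContDiff ℝ 1 (fun p : (Fin dz → ℝ) × ℝ => ut1 p.1 p.2))
    (hut : ∀ c : Fin C, c ≠ 0 →
      ContDiff ℝ 1 (fun p : (Fin dz → ℝ) × ℝ × ℝ => ut c p.1 p.2.1 p.2.2))
    (hutne : ∀ c : Fin C, c ≠ 0 → ∀ (z : Fin dz → ℝ) (yc a : ℝ),
      deriv (fun t => ut c z t a) yc ≠ 0)
    (z : Fin dz → ℝ) (y w : Fin C → ℝ) (a : ℝ) (y1 : Fin C → ℝ) :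
    (Matrix.of fun m d : Fin C =>
        deriv
          (fun t => sigma0NS C dz Λ ut1 ut vt z
            (Function.update (Function.update y 0 (y1 m)) d t) w a)
          (Function.update y 0 (y1 m) d)).mulVec
      (fun d => if d = 0 then -(deriv (fun t => ut1 z t) a)
        else (deriv (fun t => ut d z t a) (y d))⁻¹ * deriv (fun t => ut d z (y d) t) a)
    = fun m => deriv
        (fun t => sigma0NS C dz Λ ut1 ut vt z (Function.update y 0 (y1 m)) w t) a := by
  funext m
  rw [nsKey1 Λ ut1 ut vt hΛ hut1 hut hutne z (Function.update y 0 (y1 m)) w a]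
  simp only [Matrix.mulVec, dotProduct, Matrix.of_apply]
  refine Finset.sum_congr rfl fun d _ => ?_
  by_cases h0 : d = 0
  · subst h0; rfl
  · rw [Function.update_of_ne h0]

lemma nsSystem2 (hΛ : ContDiff ℝ 1 Λ)
    (hut1 : ContDiff ℝ 1 (fun p : (Fin dz → ℝ) × ℝ => ut1 p.1 p.2))
    (hut : ∀ c : Fin C, c ≠ 0 →
      ContDiff ℝ 1 (fun p : (Fin dz → ℝ) × ℝ × ℝ => ut c p.1 p.2.1 p.2.2))
    (hvt : ∀ c : Fin C, ContDiff ℝ 1 (fun p : (Fin dz → ℝ) × ℝ => vt c p.1 p.2))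
    (hutne : ∀ c : Fin C, c ≠ 0 → ∀ (z : Fin dz → ℝ) (yc a : ℝ),
      deriv (fun t => ut c z t a) yc ≠ 0)
    (hvtne : ∀ (c : Fin C) (z : Fin dz → ℝ) (wc : ℝ),
      deriv (fun t => vt c z t) wc ≠ 0)
    (z : Fin dz → ℝ) (y w : Fin C → ℝ) (a : ℝ) (k : Fin dz)
    (yh : Fin C ⊕ Fin C → ℝ) :
    (Matrix.of fun (m j : Fin C ⊕ Fin C) =>
        Sum.elim
          (fun d =>
            deriv
              (fun t => sigma0NS C dz Λ ut1 ut vt z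
                (Function.update (Function.update y 0 (yh m)) d t) w a)
              (Function.update y 0 (yh m) d))
          (fun d =>
            deriv
              (fun t => sigma0NS C dz Λ ut1 ut vt z
                (Function.update y 0 (yh m)) (Function.update w d t) a)
              (w d)) j).mulVec
      (Sum.elim
        (fun d => if d = 0 then -(deriv (fun t => ut1 (Function.update z k t) a) (z k))
          else (deriv (fun t => ut d z t a) (y d))⁻¹ *
            deriv (fun t => ut d (Function.update z k t) (y d) a) (z k))
        (fun d => (deriv (fun t => vt d z t) (w d))⁻¹ *
          deriv (fun t => vt d (Function.update z k t) (w d)) (z k)))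
    = fun m => deriv
        (fun t => sigma0NS C dz Λ ut1 ut vt (Function.update z k t)
          (Function.update y 0 (yh m)) w a) (z k) := by
  funext m
  rw [nsKey2 Λ ut1 ut vt hΛ hut1 hut hvt hutne hvtne z (Function.update y 0 (yh m)) w a k]
  simp only [Matrix.mulVec, dotProduct, Matrix.of_apply]
  rw [Fintype.sum_sum_type]
  congr 1
  refine Finset.sum_congr rfl fun d _ => ?_
  simp only [Sum.elim_inl]
  by_cases h0 : d = 0
  · subst h0; rfl
  · rw [Function.update_of_ne h0]

end Aux

/-- Proposition B.1: if two nonseparable matching models in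
inverse form induce the same unmatched probability `σ₀`, the relevant partial
derivatives of the inverse utility functions never vanish, and the two rank
conditions on the derivative matrices of `σ₀` hold (obtained by varying `y_1`),
then the derivatives `∂ũ¹/∂a`, `(∂ũ^c/∂y_c)⁻¹(∂ũ^c/∂a)`, `∂ũ¹/∂z_k`,
`(∂ũ^c/∂y_c)⁻¹(∂ũ^c/∂z_k)` and `(∂ṽ^c/∂w_c)⁻¹(∂ṽ^c/∂z_k)` coincide across the
two models at the given point. -/
theorem stmt_14 (C dz : ℕ) [NeZero C] (hC : 1 ≤ C) (hdz : 1 ≤ dz)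
    (Λ Λ' : ((Fin C → ℝ) × (Fin C → ℝ)) → ℝ)
    (ut1 ut1' : (Fin dz → ℝ) → ℝ → ℝ)
    (ut ut' : Fin C → (Fin dz → ℝ) → ℝ → ℝ → ℝ)
    (vt vt' : Fin C → (Fin dz → ℝ) → ℝ → ℝ)
    (hΛ : ContDiff ℝ 1 Λ) (hΛ' : ContDiff ℝ 1 Λ')
    (hut1 : ContDiff ℝ 1 (fun p : (Fin dz → ℝ) × ℝ => ut1 p.1 p.2))
    (hut1' : ContDiff ℝ 1 (fun p : (Fin dz → ℝ) × ℝ => ut1' p.1 p.2))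
    (hut : ∀ c : Fin C, c ≠ 0 →
      ContDiff ℝ 1 (fun p : (Fin dz → ℝ) × ℝ × ℝ => ut c p.1 p.2.1 p.2.2))
    (hut' : ∀ c : Fin C, c ≠ 0 →
      ContDiff ℝ 1 (fun p : (Fin dz → ℝ) × ℝ × ℝ => ut' c p.1 p.2.1 p.2.2))
    (hvt : ∀ c : Fin C, ContDiff ℝ 1 (fun p : (Fin dz → ℝ) × ℝ => vt c p.1 p.2))
    (hvt' : ∀ c : Fin C, ContDiff ℝ 1 (fun p : (Fin dz → ℝ) × ℝ => vt' c p.1 p.2))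
    -- the two models induce the SAME unmatched probability
    (hσeq : ∀ (z : Fin dz → ℝ) (y w : Fin C → ℝ) (a : ℝ),
      sigma0NS C dz Λ ut1 ut vt z y w a = sigma0NS C dz Λ' ut1' ut' vt' z y w a)
    -- nonvanishing of ∂ũ^c/∂y_c and ∂ṽ^c/∂w_c for both models
    (hutne : ∀ c : Fin C, c ≠ 0 → ∀ (z : Fin dz → ℝ) (yc a : ℝ),
      deriv (fun t => ut c z t a) yc ≠ 0)
    (hutne' : ∀ c : Fin C, c ≠ 0 → ∀ (z : Fin dz → ℝ) (yc a : ℝ),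
      deriv (fun t => ut' c z t a) yc ≠ 0)
    (hvtne : ∀ (c : Fin C) (z : Fin dz → ℝ) (wc : ℝ),
      deriv (fun t => vt c z t) wc ≠ 0)
    (hvtne' : ∀ (c : Fin C) (z : Fin dz → ℝ) (wc : ℝ),
      deriv (fun t => vt' c z t) wc ≠ 0)
    -- fixed point: z, w, a, and y (only the coordinates y_2,…,y_C matter)
    (z : Fin dz → ℝ) (w : Fin C → ℝ) (y : Fin C → ℝ) (a : ℝ)
    -- (i) rank condition: C values of y_1 making the C×C matrix of
    -- ∂σ₀/∂y-derivatives invertible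
    (hM1 : ∃ y1 : Fin C → ℝ,
      IsUnit (Matrix.of fun m d : Fin C =>
        deriv
          (fun t => sigma0NS C dz Λ ut1 ut vt z
            (Function.update (Function.update y 0 (y1 m)) d t) w a)
          (Function.update y 0 (y1 m) d)))
    -- (ii) rank condition: 2C values of y_1 making the 2C×2C matrix of
    -- (∂σ₀/∂y, ∂σ₀/∂w)-derivatives invertible
    (hM2 : ∃ yh : Fin C ⊕ Fin C → ℝ,
      IsUnit (Matrix.of fun (m j : Fin C ⊕ Fin C) =>
        Sum.elim
          (fun d =>
            deriv
              (fun t => sigma0NS C dz Λ ut1 ut vt z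
                (Function.update (Function.update y 0 (yh m)) d t) w a)
              (Function.update y 0 (yh m) d))
          (fun d =>
            deriv
              (fun t => sigma0NS C dz Λ ut1 ut vt z
                (Function.update y 0 (yh m)) (Function.update w d t) a)
              (w d)) j)) :
    (deriv (fun t => ut1 z t) a = deriv (fun t => ut1' z t) a) ∧
    (∀ c : Fin C, c ≠ 0 →
      (deriv (fun t => ut c z t a) (y c))⁻¹ * deriv (fun t => ut c z (y c) t) a =
        (deriv (fun t => ut' c z t a) (y c))⁻¹ *
          deriv (fun t => ut' c z (y c) t) a) ∧
    (∀ k : Fin dz,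
      (deriv (fun t => ut1 (Function.update z k t) a) (z k) =
        deriv (fun t => ut1' (Function.update z k t) a) (z k)) ∧
      (∀ c : Fin C, c ≠ 0 →
        (deriv (fun t => ut c z t a) (y c))⁻¹ *
            deriv (fun t => ut c (Function.update z k t) (y c) a) (z k) =
          (deriv (fun t => ut' c z t a) (y c))⁻¹ *
            deriv (fun t => ut' c (Function.update z k t) (y c) a) (z k)) ∧
      (∀ c : Fin C,
        (deriv (fun t => vt c z t) (w c))⁻¹ *
            deriv (fun t => vt c (Function.update z k t) (w c)) (z k) =
          (deriv (fun t => vt' c z t) (w c))⁻¹ *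
            deriv (fun t => vt' c (Function.update z k t) (w c)) (z k))) := by

  have hσfun : sigma0NS C dz Λ ut1 ut vt = sigma0NS C dz Λ' ut1' ut' vt' := by
    funext z y w a; exact hσeq z y w a
  refine ⟨?_, ?_, ?_⟩
  · obtain ⟨y1, hU⟩ := hM1
    have hA := nsSystem1 Λ ut1 ut vt hΛ hut1 hut hutne z y w a y1
    have hB := nsSystem1 Λ' ut1' ut' vt' hΛ' hut1' hut' hutne' z y w a y1
    rw [← hσfun] at hB
    have hinj := Matrix.mulVec_injective_iff_isUnit.mpr hU
    have hxx := hinj (hA.trans hB.symm)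
    simpa using congrFun hxx (0 : Fin C)
  · intro c hc
    obtain ⟨y1, hU⟩ := hM1
    have hA := nsSystem1 Λ ut1 ut vt hΛ hut1 hut hutne z y w a y1
    have hB := nsSystem1 Λ' ut1' ut' vt' hΛ' hut1' hut' hutne' z y w a y1
    rw [← hσfun] at hB
    have hinj := Matrix.mulVec_injective_iff_isUnit.mpr hU
    have hxx := hinj (hA.trans hB.symm)
    have h := congrFun hxx c
    rw [if_neg hc, if_neg hc] at h
    exact h
  · intro k
    obtain ⟨yh, hU2⟩ := hM2
    have hA2 := nsSystem2 Λ ut1 ut vt hΛ hut1 hut hvt hutne hvtne z y w a k yh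
    have hB2 := nsSystem2 Λ' ut1' ut' vt' hΛ' hut1' hut' hvt' hutne' hvtne' z y w a k yh
    rw [← hσfun] at hB2
    have hinj2 := Matrix.mulVec_injective_iff_isUnit.mpr hU2
    have hxx2 := hinj2 (hA2.trans hB2.symm)
    refine ⟨?_, ?_, ?_⟩
    · simpa using congrFun hxx2 (Sum.inl (0 : Fin C))
    · intro c hc
      have h := congrFun hxx2 (Sum.inl c)
      simp only [Sum.elim_inl, if_neg hc] at h
      exact h
    · intro c
      simpa using congrFun hxx2 (Sum.inr c)
end
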